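/- arXiv:1309.3715 — 7 statements merged into one kernel-verified Lean document; each statement's English description precedes it below -/
import Mathlib

section
/- If a, b, c, d are four distinct points of the projective line over a field F, then there exists exactly one involution in PGL(2,F) that interchanges a with c and interchanges b with d. -/
/-- The action of `GL(2, F)` on the projective line `ℙ¹(F)` induced by matrix-vector
multiplication. -/
noncomputable def glPointMap {F : Type*} [Field F] (g : GL (Fin 2) F) :
    Projectivization F (Fin 2 → F) → Projectivization F (Fin 2 → F) :=
  Projectivization.map ((g : Matrix (Fin 2) (Fin 2) F).mulVecLin)
    (Function.LeftInverse.injective (g := ((g⁻¹ : GL (Fin 2) F) :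
        Matrix (Fin 2) (Fin 2) F).mulVecLin) (fun x => by
      have h1 : ((g : Matrix (Fin 2) (Fin 2) F))⁻¹ *
          (g : Matrix (Fin 2) (Fin 2) F) = 1 := by
        rw [← Matrix.coe_units_inv]; exact_mod_cast g.inv_mul
      simp only [Matrix.mulVecLin_apply, Matrix.mulVec_mulVec, Matrix.coe_units_inv, h1,
        Matrix.one_mulVec]))

namespace Stmt0Aux

variable {F : Type*} [Field F]

/-- 2x2 cross determinant. -/
def cross (u v : Fin 2 → F) : F := u 0 * v 1 - u 1 * v 0

lemma vec_ne_zero_iff {u : Fin 2 → F} : u ≠ 0 ↔ u 0 ≠ 0 ∨ u 1 ≠ 0 := by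
  constructor
  · intro h
    by_contra hc
    push_neg at hc
    exact h (funext fun i => by fin_cases i <;> simp [hc.1, hc.2])
  · rintro (h | h) rfl <;> simp at h

lemma mk_eq_of_cross {u v : Fin 2 → F} (hu : u ≠ 0) (hv : v ≠ 0) (h : cross u v = 0) :
    Projectivization.mk F u hu = Projectivization.mk F v hv := by
  rw [Projectivization.mk_eq_mk_iff']
  have h' : u 0 * v 1 - u 1 * v 0 = 0 := h
  rcases vec_ne_zero_iff.mp hv with h0 | h1
  · refine ⟨u 0 / v 0, funext fun i => ?_⟩
    fin_cases i <;>
      (simp only [Fin.mk_zero, Fin.mk_one, Pi.smul_apply, smul_eq_mul]; field_simp)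
    linear_combination h'
  · refine ⟨u 1 / v 1, funext fun i => ?_⟩
    fin_cases i <;>
      (simp only [Fin.mk_zero, Fin.mk_one, Pi.smul_apply, smul_eq_mul]; field_simp)
    linear_combination -h'

lemma cross_ne_of_mk_ne {u v : Fin 2 → F} (hu : u ≠ 0) (hv : v ≠ 0)
    (h : Projectivization.mk F u hu ≠ Projectivization.mk F v hv) : cross u v ≠ 0 :=
  fun hc => h (mk_eq_of_cross hu hv hc)

lemma coords_eq_zero {u v : Fin 2 → F} (h : cross u v ≠ 0) {α β : F}
    (h0 : α • u + β • v = 0) : α = 0 ∧ β = 0 := by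
  have e0 := congrFun h0 0
  have e1 := congrFun h0 1
  simp only [Pi.add_apply, Pi.smul_apply, smul_eq_mul, Pi.zero_apply] at e0 e1
  constructor
  · have hα : α * cross u v = 0 := by
      unfold cross; linear_combination v 1 * e0 - v 0 * e1
    rcases mul_eq_zero.mp hα with h' | h'
    · exact h'
    · exact absurd h' h
  · have hβ : β * cross u v = 0 := by
      unfold cross; linear_combination u 0 * e1 - u 1 * e0
    rcases mul_eq_zero.mp hβ with h' | h'
    · exact h'
    · exact absurd h' h

lemma decomp {u v : Fin 2 → F} (h : cross u v ≠ 0) (x : Fin 2 → F) :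
    x = ((x 0 * v 1 - x 1 * v 0) / cross u v) • u
        + ((u 0 * x 1 - u 1 * x 0) / cross u v) • v := by
  funext k
  fin_cases k <;>
    (simp only [Fin.mk_zero, Fin.mk_one, Pi.add_apply, Pi.smul_apply, smul_eq_mul]
     rw [div_mul_eq_mul_div, div_mul_eq_mul_div, ← add_div, eq_div_iff h]
     unfold cross; ring)

lemma matrix_eq_of_basis {u v : Fin 2 → F} (h : cross u v ≠ 0)
    {A B : Matrix (Fin 2) (Fin 2) F}
    (hu : A.mulVec u = B.mulVec u) (hv : A.mulVec v = B.mulVec v) : A = B := by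
  have key : ∀ x : Fin 2 → F, A.mulVec x = B.mulVec x := by
    intro x
    rw [decomp h x]
    simp only [Matrix.mulVec_add, Matrix.mulVec_smul, hu, hv]
  ext i j
  have := congrFun (key (Pi.single j 1)) i
  simpa [Matrix.mulVec_single] using this

lemma scalar_mem_center {g : GL (Fin 2) F} {s : F}
    (h : (g : Matrix (Fin 2) (Fin 2) F) = s • (1 : Matrix (Fin 2) (Fin 2) F)) :
    g ∈ Subgroup.center (GL (Fin 2) F) := by
  rw [Subgroup.mem_center_iff]
  intro k
  apply Units.ext
  push_cast
  rw [h, Matrix.mul_smul, Matrix.smul_mul, mul_one, one_mul]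

def transv1 : GL (Fin 2) F := ⟨!![1,1;0,1], !![1,-1;0,1], by
  simp [Matrix.mul_fin_two, Matrix.one_fin_two], by
  simp [Matrix.mul_fin_two, Matrix.one_fin_two]⟩

def transv2 : GL (Fin 2) F := ⟨!![1,0;1,1], !![1,0;-1,1], by
  simp [Matrix.mul_fin_two, Matrix.one_fin_two], by
  simp [Matrix.mul_fin_two, Matrix.one_fin_two]⟩

lemma center_scalar {g : GL (Fin 2) F} (h : g ∈ Subgroup.center (GL (Fin 2) F)) :
    ∃ s : F, (g : Matrix (Fin 2) (Fin 2) F) = s • (1 : Matrix (Fin 2) (Fin 2) F) := by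
  rw [Subgroup.mem_center_iff] at h
  set m : Matrix (Fin 2) (Fin 2) F := (g : Matrix (Fin 2) (Fin 2) F) with hm
  have e1 : !![(1:F),1;0,1] * m = m * !![1,1;0,1] :=
    congrArg Units.val (h transv1)
  have e2 : !![(1:F),0;1,1] * m = m * !![1,0;1,1] :=
    congrArg Units.val (h transv2)
  have e1' := congrFun (congrFun e1 0) 0
  have e1'' := congrFun (congrFun e1 0) 1
  have e2' := congrFun (congrFun e2 0) 0
  simp [Matrix.mul_apply, Fin.sum_univ_two] at e1' e1'' e2'
  have h11 : m 1 1 = m 0 0 := by linear_combination e1''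
  refine ⟨m 0 0, ?_⟩
  ext i j
  fin_cases i <;> fin_cases j <;>
    simp [e1', e2', h11, Matrix.one_apply]

lemma mulVec_ne_zero (g : GL (Fin 2) F) {v : Fin 2 → F} (hv : v ≠ 0) :
    (g : Matrix (Fin 2) (Fin 2) F).mulVec v ≠ 0 := by
  intro h
  apply hv
  have h2 := congrArg ((g⁻¹ : GL (Fin 2) F) : Matrix (Fin 2) (Fin 2) F).mulVec h
  rwa [Matrix.mulVec_mulVec, g.inv_mul, Matrix.one_mulVec, Matrix.mulVec_zero] at h2

lemma glPointMap_mk (g : GL (Fin 2) F) {v : Fin 2 → F} (hv : v ≠ 0) :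
    glPointMap g (Projectivization.mk F v hv) =
      Projectivization.mk F ((g : Matrix (Fin 2) (Fin 2) F).mulVec v) (mulVec_ne_zero g hv) := by
  unfold glPointMap
  rw [Projectivization.map_mk]; rfl

lemma glPointMap_eq_of_smul {g g' : GL (Fin 2) F} {s : F}
    (h : (g : Matrix (Fin 2) (Fin 2) F) = s • (g' : Matrix (Fin 2) (Fin 2) F))
    (x : Projectivization F (Fin 2 → F)) : glPointMap g x = glPointMap g' x := by
  induction x with
  | h v hv =>
    rw [glPointMap_mk, glPointMap_mk, Projectivization.mk_eq_mk_iff']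
    exact ⟨s, by rw [h, Matrix.smul_mulVec]⟩

lemma glPointMap_of_scalar {g : GL (Fin 2) F} {s : F}
    (h : (g : Matrix (Fin 2) (Fin 2) F) = s • (1 : Matrix (Fin 2) (Fin 2) F))
    (x : Projectivization F (Fin 2 → F)) : glPointMap g x = x := by
  induction x with
  | h v hv =>
    rw [glPointMap_mk, Projectivization.mk_eq_mk_iff']
    exact ⟨s, by rw [h, Matrix.smul_mulVec, Matrix.one_mulVec]⟩

end Stmt0Aux

open Stmt0Aux in
/-- If `a, b, c, d` are four distinct points of the projective line over a field `F`,
then there is a unique involution in `PGL(2, F)` interchanging `a` with `c` and `b`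
with `d`. -/
theorem stmt_0 {F : Type*} [Field F]
    (a b c d : Projectivization F (Fin 2 → F))
    (hab : a ≠ b) (hac : a ≠ c) (had : a ≠ d) (hbc : b ≠ c) (hbd : b ≠ d) (hcd : c ≠ d) :
    ∃! z : GL (Fin 2) F ⧸ Subgroup.center (GL (Fin 2) F),
      orderOf z = 2 ∧
        ∀ g : GL (Fin 2) F, (g : GL (Fin 2) F ⧸ Subgroup.center (GL (Fin 2) F)) = z →
          glPointMap g a = c ∧ glPointMap g c = a ∧
            glPointMap g b = d ∧ glPointMap g d = b := by
  classical
  -- representatives of a and c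
  obtain ⟨u', hu', ha'⟩ : ∃ (u' : Fin 2 → F) (hu' : u' ≠ 0),
      Projectivization.mk F u' hu' = a := ⟨a.rep, a.rep_nonzero, a.mk_rep⟩
  obtain ⟨v', hv', hc'⟩ : ∃ (v' : Fin 2 → F) (hv' : v' ≠ 0),
      Projectivization.mk F v' hv' = c := ⟨c.rep, c.rep_nonzero, c.mk_rep⟩
  have hcross' : cross u' v' ≠ 0 :=
    cross_ne_of_mk_ne hu' hv' (by rw [ha', hc']; exact hac)
  -- decompose a representative of b
  obtain ⟨w, hw, hbw⟩ : ∃ (w : Fin 2 → F) (hw : w ≠ 0),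
      Projectivization.mk F w hw = b := ⟨b.rep, b.rep_nonzero, b.mk_rep⟩
  obtain ⟨α, β, hwd⟩ : ∃ α β : F, w = α • u' + β • v' :=
    ⟨_, _, decomp hcross' w⟩
  have hα : α ≠ 0 := by
    rintro rfl
    rw [zero_smul, zero_add] at hwd
    have hβ : β ≠ 0 := by rintro rfl; rw [zero_smul] at hwd; exact hw hwd
    apply hbc
    rw [← hbw, ← hc']
    exact Projectivization.mk_eq_mk_iff' F _ _ _ _ |>.mpr ⟨β, hwd.symm⟩
  have hβ : β ≠ 0 := by
    rintro rfl
    rw [zero_smul, add_zero] at hwd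
    apply hab
    rw [← hbw, ← ha']
    exact (Projectivization.mk_eq_mk_iff' F _ _ _ _ |>.mpr ⟨α, hwd.symm⟩).symm
  -- rescale
  set u : Fin 2 → F := α • u' with hudef
  set v : Fin 2 → F := β • v' with hvdef
  have hu : u ≠ 0 := smul_ne_zero hα hu'
  have hv : v ≠ 0 := smul_ne_zero hβ hv'
  have ha : Projectivization.mk F u hu = a := by
    rw [← ha']; exact Projectivization.mk_eq_mk_iff' F _ _ _ _ |>.mpr ⟨α, rfl⟩
  have hc : Projectivization.mk F v hv = c := by
    rw [← hc']; exact Projectivization.mk_eq_mk_iff' F _ _ _ _ |>.mpr ⟨β, rfl⟩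
  have huv : u + v ≠ 0 := by rw [← hwd]; exact hw
  have hb : Projectivization.mk F (u + v) huv = b := by
    rw [← hbw]
    exact Projectivization.mk_eq_mk_iff' F _ _ _ _ |>.mpr ⟨1, by rw [one_smul, hwd]⟩
  have hcuv : cross u v ≠ 0 := by
    have : cross u v = α * β * cross u' v' := by
      simp only [hudef, hvdef, cross, Pi.smul_apply, smul_eq_mul]; ring
    rw [this]
    exact mul_ne_zero (mul_ne_zero hα hβ) hcross'
  -- decompose the representative of d
  obtain ⟨δ, ε, hd'⟩ : ∃ δ ε : F, d.rep = δ • u + ε • v :=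
    ⟨_, _, decomp hcuv d.rep⟩
  have hδ : δ ≠ 0 := by
    rintro rfl
    rw [zero_smul, zero_add] at hd'
    have hε : ε ≠ 0 := by rintro rfl; rw [zero_smul] at hd'; exact d.rep_nonzero hd'
    apply hcd
    rw [← hc, ← d.mk_rep]
    exact (Projectivization.mk_eq_mk_iff' F _ _ _ _ |>.mpr ⟨ε, hd'.symm⟩).symm
  have hε : ε ≠ 0 := by
    rintro rfl
    rw [zero_smul, add_zero] at hd'
    apply had
    rw [← ha, ← d.mk_rep]
    exact (Projectivization.mk_eq_mk_iff' F _ _ _ _ |>.mpr ⟨δ, hd'.symm⟩).symm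
  set t : F := δ / ε with htdef
  have ht : t ≠ 0 := div_ne_zero hδ hε
  have htε : t * ε = δ := by rw [htdef]; field_simp
  -- the matrices
  set P : Matrix (Fin 2) (Fin 2) F := Matrix.of ![![u 0, v 0], ![u 1, v 1]] with hPdef
  set Q : Matrix (Fin 2) (Fin 2) F :=
    (cross u v)⁻¹ • Matrix.of ![![v 1, -(v 0)], ![-(u 1), u 0]] with hQdef
  have hcuv2 : u 0 * v 1 - u 1 * v 0 ≠ 0 := hcuv
  have hPQ : P * Q = 1 := by
    ext i j
    fin_cases i <;> fin_cases j <;>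
      (simp [hPdef, hQdef, cross, Matrix.mul_apply, Fin.sum_univ_two, Matrix.one_apply]
       try field_simp
       try ring)
  have hQP : Q * P = 1 := by
    ext i j
    fin_cases i <;> fin_cases j <;>
      (simp [hPdef, hQdef, cross, Matrix.mul_apply, Fin.sum_univ_two, Matrix.one_apply]
       try field_simp
       try ring)
  set Mm : Matrix (Fin 2) (Fin 2) F := !![0, t; 1, 0] with hMdef
  set Mi : Matrix (Fin 2) (Fin 2) F := !![0, 1; t⁻¹, 0] with hMidef
  have hMMi : Mm * Mi = 1 := by
    rw [hMdef, hMidef, Matrix.mul_fin_two, Matrix.one_fin_two]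
    field_simp
    simp
  have hMiM : Mi * Mm = 1 := by
    rw [hMdef, hMidef, Matrix.mul_fin_two, Matrix.one_fin_two]
    field_simp
    simp
  set Pu : GL (Fin 2) F := ⟨P, Q, hPQ, hQP⟩ with hPudef
  set Mu : GL (Fin 2) F := ⟨Mm, Mi, hMMi, hMiM⟩ with hMudef
  set g : GL (Fin 2) F := Pu * Mu * Pu⁻¹ with hgdef
  have hgval : (g : Matrix (Fin 2) (Fin 2) F) = P * Mm * Q := rfl
  have hPmul : ∀ x : Fin 2 → F, P.mulVec x = x 0 • u + x 1 • v := by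
    intro x
    funext i
    fin_cases i <;>
      simp [hPdef, Matrix.mulVec, dotProduct, Fin.sum_univ_two, mul_comm]
  have hMmul : ∀ x : Fin 2 → F, Mm.mulVec x = ![t * x 1, x 0] := by
    intro x
    funext i
    fin_cases i <;>
      simp [hMdef, Matrix.mulVec, dotProduct, Fin.sum_univ_two]
  have hkey : ∀ x : Fin 2 → F,
      (P * Mm * Q).mulVec (P.mulVec x) = P.mulVec (Mm.mulVec x) := by
    intro x
    rw [Matrix.mulVec_mulVec]
    have h1 : P * Mm * Q * P = P * Mm := by
      rw [mul_assoc (P * Mm) Q P, hQP, mul_one]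
    rw [h1, ← Matrix.mulVec_mulVec]
  -- the four mulVec facts
  have hga : (g : Matrix (Fin 2) (Fin 2) F).mulVec u = v := by
    have h1 : u = P.mulVec ![1, 0] := by rw [hPmul]; simp
    rw [hgval, h1, hkey, hMmul, hPmul]; simp
  have hgc : (g : Matrix (Fin 2) (Fin 2) F).mulVec v = t • u := by
    have h1 : v = P.mulVec ![0, 1] := by rw [hPmul]; simp
    rw [hgval, h1, hkey, hMmul, hPmul]; simp
  have hgb : (g : Matrix (Fin 2) (Fin 2) F).mulVec (u + v) = t • u + v := by
    have h1 : u + v = P.mulVec ![1, 1] := by rw [hPmul]; simp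
    rw [hgval, h1, hkey, hMmul, hPmul]; simp
  have hgd : (g : Matrix (Fin 2) (Fin 2) F).mulVec d.rep = δ • (u + v) := by
    have h1 : d.rep = P.mulVec ![δ, ε] := by rw [hPmul, hd']; simp
    rw [hgval, h1, hkey, hMmul, hPmul]
    simp [htε, smul_add]
  -- the four point facts
  have pa : glPointMap g a = c := by
    rw [← ha, glPointMap_mk, ← hc]
    exact Projectivization.mk_eq_mk_iff' F _ _ _ _ |>.mpr ⟨1, by rw [one_smul, hga]⟩
  have pc : glPointMap g c = a := by
    rw [← hc, glPointMap_mk, ← ha]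
    exact Projectivization.mk_eq_mk_iff' F _ _ _ _ |>.mpr ⟨t, hgc.symm⟩
  have pb : glPointMap g b = d := by
    rw [← hb, glPointMap_mk, ← d.mk_rep]
    refine Projectivization.mk_eq_mk_iff' F _ _ _ _ |>.mpr ⟨ε⁻¹, ?_⟩
    rw [hgb, hd']
    have hmod : ε⁻¹ • (δ • u + ε • v) = (ε⁻¹ * δ) • u + (ε⁻¹ * ε) • v := by module
    rw [hmod, inv_mul_cancel₀ hε, one_smul]
    congr 1
    rw [htdef, div_eq_mul_inv, mul_comm]
  have pd : glPointMap g d = b := by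
    rw [← d.mk_rep, glPointMap_mk, ← hb]
    exact Projectivization.mk_eq_mk_iff' F _ _ _ _ |>.mpr ⟨δ, hgd.symm⟩
  -- g² is central
  have hMsq : Mm * Mm = t • 1 := by
    rw [hMdef, Matrix.mul_fin_two, Matrix.one_fin_two, Matrix.smul_of]
    norm_num
  have hg2val : ((g ^ 2 : GL (Fin 2) F) : Matrix (Fin 2) (Fin 2) F)
      = t • (1 : Matrix (Fin 2) (Fin 2) F) := by
    have h1 : ((g ^ 2 : GL (Fin 2) F) : Matrix (Fin 2) (Fin 2) F)
        = (P * Mm * Q) * (P * Mm * Q) := by rw [sq]; rfl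
    rw [h1]
    calc (P * Mm * Q) * (P * Mm * Q)
        = P * Mm * ((Q * P) * (Mm * Q)) := by simp only [mul_assoc]
      _ = P * (Mm * Mm) * Q := by rw [hQP, one_mul]; simp only [mul_assoc]
      _ = t • (P * Q) := by rw [hMsq]; simp only [mul_smul_comm, smul_mul_assoc, mul_one]
      _ = t • 1 := by rw [hPQ]
  have hcen2 : g ^ 2 ∈ Subgroup.center (GL (Fin 2) F) := scalar_mem_center hg2val
  -- order two
  have hz2 : ((g : GL (Fin 2) F ⧸ Subgroup.center (GL (Fin 2) F))) ^ 2 = 1 := by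
    rw [← QuotientGroup.mk_pow]
    exact (QuotientGroup.eq_one_iff _).mpr hcen2
  have hz1 : ((g : GL (Fin 2) F ⧸ Subgroup.center (GL (Fin 2) F))) ≠ 1 := by
    intro h1
    obtain ⟨s, hs⟩ := center_scalar ((QuotientGroup.eq_one_iff g).mp h1)
    exact hac ((glPointMap_of_scalar hs a).symm.trans pa)
  have horder : orderOf ((g : GL (Fin 2) F ⧸ Subgroup.center (GL (Fin 2) F))) = 2 :=
    orderOf_eq_prime hz2 hz1
  -- all lifts act correctly
  have hall : ∀ g'' : GL (Fin 2) F,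
      ((g'' : GL (Fin 2) F ⧸ Subgroup.center (GL (Fin 2) F))
        = (g : GL (Fin 2) F ⧸ Subgroup.center (GL (Fin 2) F))) →
      glPointMap g'' a = c ∧ glPointMap g'' c = a ∧
        glPointMap g'' b = d ∧ glPointMap g'' d = b := by
    intro g'' hg''
    have hcen : g''⁻¹ * g ∈ Subgroup.center (GL (Fin 2) F) := QuotientGroup.eq.mp hg''
    obtain ⟨s, hs⟩ := center_scalar hcen
    have hval : (g : Matrix (Fin 2) (Fin 2) F)
        = s • (g'' : Matrix (Fin 2) (Fin 2) F) := by
      have h1 : g'' * (g''⁻¹ * g) = g := by group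
      calc (g : Matrix (Fin 2) (Fin 2) F)
          = ((g'' * (g''⁻¹ * g) : GL (Fin 2) F) : Matrix (Fin 2) (Fin 2) F) := by rw [h1]
        _ = (g'' : Matrix (Fin 2) (Fin 2) F)
            * ((g''⁻¹ * g : GL (Fin 2) F) : Matrix (Fin 2) (Fin 2) F) := rfl
        _ = (g'' : Matrix (Fin 2) (Fin 2) F) * (s • 1) := by rw [hs]
        _ = s • (g'' : Matrix (Fin 2) (Fin 2) F) := by rw [Matrix.mul_smul, mul_one]
    have hmap : ∀ x, glPointMap g'' x = glPointMap g x :=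
      fun x => (glPointMap_eq_of_smul hval x).symm
    exact ⟨(hmap a).trans pa, (hmap c).trans pc, (hmap b).trans pb, (hmap d).trans pd⟩
  refine ⟨(g : GL (Fin 2) F ⧸ Subgroup.center (GL (Fin 2) F)), ⟨horder, hall⟩, ?_⟩
  -- uniqueness
  rintro z' ⟨-, h2⟩
  obtain ⟨g', rfl⟩ := QuotientGroup.mk_surjective z'
  obtain ⟨p1, p2, p3, p4⟩ := h2 g' rfl
  rw [← ha, glPointMap_mk, ← hc] at p1
  obtain ⟨s1, hs1⟩ := Projectivization.mk_eq_mk_iff' F _ _ _ _ |>.mp p1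
  rw [← hc, glPointMap_mk, ← ha] at p2
  obtain ⟨s2, hs2⟩ := Projectivization.mk_eq_mk_iff' F _ _ _ _ |>.mp p2
  rw [← hb, glPointMap_mk, ← d.mk_rep] at p3
  obtain ⟨s3, hs3⟩ := Projectivization.mk_eq_mk_iff' F _ _ _ _ |>.mp p3
  -- coefficient identities
  have e : s2 • u + s1 • v = (s3 * δ) • u + (s3 * ε) • v := by
    calc s2 • u + s1 • v
        = (g' : Matrix (Fin 2) (Fin 2) F).mulVec v
          + (g' : Matrix (Fin 2) (Fin 2) F).mulVec u := by rw [hs1, hs2]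
      _ = (g' : Matrix (Fin 2) (Fin 2) F).mulVec (u + v) := by
          rw [Matrix.mulVec_add, add_comm]
      _ = s3 • d.rep := hs3.symm
      _ = (s3 * δ) • u + (s3 * ε) • v := by
          rw [hd']; module
  have hexp : (s2 - s3 * δ) • u + (s1 - s3 * ε) • v = 0 := by
    have h0 := sub_eq_zero_of_eq e
    calc (s2 - s3 * δ) • u + (s1 - s3 * ε) • v
        = (s2 • u + s1 • v) - ((s3 * δ) • u + (s3 * ε) • v) := by module
      _ = 0 := h0
  obtain ⟨k1, k2⟩ := coords_eq_zero hcuv hexp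
  have hk1 : s2 = s3 * δ := by linear_combination k1
  have hk2 : s1 = s3 * ε := by linear_combination k2
  -- m is a scalar multiple of g
  have hmeq : (g' : Matrix (Fin 2) (Fin 2) F) = (s3 * ε) • (g : Matrix (Fin 2) (Fin 2) F) := by
    refine matrix_eq_of_basis hcuv ?_ ?_
    · rw [Matrix.smul_mulVec, hga, ← hs1, hk2]
    · have hco : s3 * δ = s3 * ε * t := by
        rw [htdef]; field_simp
      rw [Matrix.smul_mulVec, hgc, ← hs2, hk1, hco]
      module
  -- conclude the quotient equality
  have hcentm : g' * g⁻¹ ∈ Subgroup.center (GL (Fin 2) F) := by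
    refine scalar_mem_center (s := s3 * ε) ?_
    calc ((g' * g⁻¹ : GL (Fin 2) F) : Matrix (Fin 2) (Fin 2) F)
        = (g' : Matrix (Fin 2) (Fin 2) F)
          * ((g⁻¹ : GL (Fin 2) F) : Matrix (Fin 2) (Fin 2) F) := rfl
      _ = ((s3 * ε) • (g : Matrix (Fin 2) (Fin 2) F))
          * ((g⁻¹ : GL (Fin 2) F) : Matrix (Fin 2) (Fin 2) F) := by rw [hmeq]
      _ = (s3 * ε) • ((g : Matrix (Fin 2) (Fin 2) F)
          * ((g⁻¹ : GL (Fin 2) F) : Matrix (Fin 2) (Fin 2) F)) := by rw [Matrix.smul_mul]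
      _ = (s3 * ε) • (1 : Matrix (Fin 2) (Fin 2) F) := by rw [g.mul_inv]
  have hcent' : g * g'⁻¹ ∈ Subgroup.center (GL (Fin 2) F) := by
    have := Subgroup.inv_mem _ hcentm
    rwa [mul_inv_rev, inv_inv] at this
  show _ = _
  rw [QuotientGroup.eq]
  have hcomm := Subgroup.mem_center_iff.mp hcent'
  have heq : g'⁻¹ * g = g * g'⁻¹ := by
    calc g'⁻¹ * g = g'⁻¹ * (g * g'⁻¹) * g' := by group
      _ = (g * g'⁻¹) * g'⁻¹ * g' := by rw [hcomm g'⁻¹]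
      _ = g * g'⁻¹ := by group
  rw [heq]
  exact hcent'
end

section
/- Let G = PGL(2,q) with q > 2 even, write q² − 1 = 2k + 1, and let h ∈ G be a nontrivial element of odd order. If g ∈ G satisfies [h, h^g] ≠ 1, then either [h, h^g] is an involution or (h·h^g)^k · h is an involution. -/
namespace Stmt3Aux

variable {F : Type*} [Field F]

/-- Cayley–Hamilton, 2×2, det 1, char 2. -/
lemma ch2 (h2 : (2:F) = 0) (M : Matrix (Fin 2) (Fin 2) F) (hd : M.det = 1) :
    M * M = M.trace • M + 1 := by
  obtain ⟨a, b, c, d, rfl⟩ : ∃ a b c d, M = !![a,b;c,d] := ⟨_,_,_,_, Matrix.eta_fin_two M⟩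
  rw [Matrix.det_fin_two_of] at hd
  ext i j
  fin_cases i <;> fin_cases j <;>
    simp [Matrix.mul_fin_two, Matrix.trace_fin_two_of, Matrix.one_fin_two, Matrix.smul_apply]
  all_goals first
    | ring1
    | linear_combination (-1:F) * hd + (-1:F) * h2
    | linear_combination (1:F) * hd + (-1:F) * h2
    | linear_combination (-1:F) * hd + (1:F) * h2
    | linear_combination (1:F) * hd + (1:F) * h2

lemma mul_compl (h2 : (2:F) = 0) (M : Matrix (Fin 2) (Fin 2) F) (hd : M.det = 1) :
    M * (M.trace • 1 + M) = 1 := by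
  have h := ch2 h2 M hd
  rw [mul_add, mul_smul_comm, mul_one, h, ← add_assoc, ← add_smul]
  have h0 : M.trace + M.trace = 0 := by linear_combination M.trace * h2
  rw [h0, zero_smul, zero_add]

lemma coe_inv (h2 : (2:F) = 0) (U : GL (Fin 2) F)
    (hd : ((U : Matrix (Fin 2) (Fin 2) F)).det = 1) :
    ((U⁻¹ : GL (Fin 2) F) : Matrix (Fin 2) (Fin 2) F)
      = (U : Matrix (Fin 2) (Fin 2) F).trace • 1 + (U : Matrix (Fin 2) (Fin 2) F) := by
  have h := mul_compl h2 _ hd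
  calc ((U⁻¹ : GL (Fin 2) F) : Matrix (Fin 2) (Fin 2) F)
      = ((U⁻¹ : GL (Fin 2) F) : Matrix (Fin 2) (Fin 2) F) *
        ((U : Matrix (Fin 2) (Fin 2) F) *
          ((U : Matrix (Fin 2) (Fin 2) F).trace • 1 + (U : Matrix (Fin 2) (Fin 2) F))) := by
        rw [h, mul_one]
    _ = _ := by rw [← mul_assoc, U.inv_mul, one_mul]

lemma sq_inj (h2 : (2:F) = 0) {x y : F} (hxy : x * x = y * y) : x = y := by
  have hz : (x + y) * (x + y) = 0 := by linear_combination hxy + (x*y + y*y) * h2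
  have hxy0 : x + y = 0 := by rcases mul_eq_zero.mp hz with h | h <;> exact h
  have hy : y + y = 0 := by linear_combination y * h2
  linear_combination hxy0 - hy

def alph (c : F) : ℕ → F
  | 0 => 0
  | 1 => 1
  | n+2 => c * alph c (n+1) + alph c n

@[simp] lemma alph_zero (c : F) : alph c 0 = 0 := rfl
@[simp] lemma alph_one (c : F) : alph c 1 = 1 := rfl
lemma alph_add_two (c : F) (n : ℕ) : alph c (n+2) = c * alph c (n+1) + alph c n := rfl

lemma Tpow (c : F) (T : Matrix (Fin 2) (Fin 2) F) (hT : T * T = c • T + 1) (n : ℕ) :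
    T ^ (n+1) = alph c (n+1) • T + alph c n • (1 : Matrix (Fin 2) (Fin 2) F) := by
  induction n with
  | zero => simp
  | succ n ih =>
    rw [pow_succ, ih, alph_add_two, add_mul, smul_mul_assoc, smul_mul_assoc, one_mul, hT,
      smul_add, smul_smul, add_smul]
    module

lemma alph_double (h2 : (2:F) = 0) (c : F) (n : ℕ) :
    alph c (2*n) = c * (alph c n * alph c n) ∧
    alph c (2*n+1) = alph c (n+1) * alph c (n+1) + alph c n * alph c n := by
  induction n with
  | zero => simp
  | succ n ih =>
    obtain ⟨ih1, ih2⟩ := ih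
    have e1 : 2*(n+1) = (2*n) + 2 := by ring
    have e2 : 2*(n+1)+1 = (2*n+1) + 2 := by ring
    constructor
    · rw [e1, alph_add_two, show 2*n+1 = (2*n)+1 from rfl, ih2, ih1]
      linear_combination (c * (alph c n * alph c n)) * h2
    · rw [e2, alph_add_two, show (2*n+1)+1 = 2*n+2 from rfl, alph_add_two, ih2, ih1,
        alph_add_two]
      linear_combination (c*c*(alph c n * alph c n) + c*(alph c (n+1) * alph c n)
        - 2*c*(alph c (n+1) * alph c n)) * h2

lemma alph_pow2 (h2 : (2:F) = 0) (c : F) (m : ℕ) :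
    alph c (2^m) = c ^ (2^m - 1) := by
  induction m with
  | zero => simp
  | succ m ih =>
    have h1 : (1:ℕ) ≤ 2^m := Nat.one_le_two_pow
    have e1 : 2^(m+1) = 2 * 2^m := by rw [pow_succ]; ring
    rw [e1, (alph_double h2 c (2^m)).1, ih, ← pow_add]
    rw [show c * c ^ (2 ^ m - 1 + (2 ^ m - 1)) = c ^ (2^m - 1 + (2^m - 1) + 1) from by ring]
    congr 1
    omega

lemma v_closed [CharP F 2] (c : F) (m : ℕ) :
    alph c (2^(m+1) - 1) = (∑ j ∈ Finset.range (m+1), c^(2^m - 2^j)) ^ 2 := by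
  have h2 : (2:F) = 0 := CharTwo.two_eq_zero
  induction m with
  | zero => simp [alph]
  | succ m ih =>
    have h1 : (1:ℕ) ≤ 2^(m+1) := Nat.one_le_two_pow
    have e1 : 2^(m+2) - 1 = 2*(2^(m+1) - 1) + 1 := by
      have : (2:ℕ)^(m+2) = 2 * 2^(m+1) := by ring
      omega
    have e2 : (2^(m+1) - 1) + 1 = 2^(m+1) := by omega
    rw [e1, (alph_double h2 c _).2, e2, alph_pow2 h2, ih]
    have hsum : ∑ j ∈ Finset.range (m+2), c^(2^(m+1) - 2^j)
        = (∑ j ∈ Finset.range (m+1), c^(2^m - 2^j)) ^ 2 + c^(2^(m+1) - 1) := by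
      rw [Finset.sum_range_succ', CharTwo.sum_sq, pow_zero]
      congr 1
      apply Finset.sum_congr rfl
      intro j hj
      rw [← pow_mul]
      congr 1
      have hj' : j < m+1 := Finset.mem_range.mp hj
      have hle : (2:ℕ)^j ≤ 2^m := Nat.pow_le_pow_right (by norm_num) (by omega)
      have hp1 : (2:ℕ)^(m+1) = 2 * 2^m := by ring
      have hp2 : (2:ℕ)^(j+1) = 2 * 2^j := by ring
      omega
    rw [hsum, CharTwo.add_sq]
    ring

lemma alph_vanish [Fintype F] [CharP F 2] {e : ℕ} (he : 1 ≤ e)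
    (hF : Fintype.card F = 2 ^ e) {c : F} (hc : c ≠ 0) :
    alph c (2^(2*e) - 1) = 0 := by
  have h2 : (2:F) = 0 := CharTwo.two_eq_zero
  have hc1 : c ^ (2^e - 1) = 1 := by
    have := FiniteField.pow_card_sub_one_eq_one c hc
    rwa [hF] at this
  have em : 2*e = (2*e - 1) + 1 := by omega
  rw [em, v_closed]
  have hsum : ∑ j ∈ Finset.range (2*e - 1 + 1), c^(2^(2*e-1) - 2^j) = 0 := by
    have e2 : 2*e - 1 + 1 = e + e := by omega
    rw [e2, Finset.sum_range_add]
    have hterm : ∀ j ∈ Finset.range e, c^(2^(2*e-1) - 2^(e+j)) = c^(2^(2*e-1) - 2^j) := by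
      intro j hj
      have hj' : j < e := Finset.mem_range.mp hj
      have hle1 : (2:ℕ)^(e+j) ≤ 2^(2*e-1) := Nat.pow_le_pow_right (by norm_num) (by omega)
      have hle2 : (2:ℕ)^j ≤ 2^(e+j) := Nat.pow_le_pow_right (by norm_num) (by omega)
      have hmul : ((2:ℕ)^e - 1) * 2^j = 2^(e+j) - 2^j := by
        rw [Nat.sub_mul, one_mul, ← pow_add]
      have hexp : (2^(2*e-1) - 2^(e+j)) + ((2^e - 1) * 2^j) = 2^(2*e-1) - 2^j := by omega
      have hcalc : c^(2^(2*e-1) - 2^j) = c^(2^(2*e-1) - 2^(e+j)) := by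
        calc c^(2^(2*e-1) - 2^j) = c^((2^(2*e-1) - 2^(e+j)) + ((2^e - 1) * 2^j)) := by
              rw [hexp]
          _ = c^(2^(2*e-1) - 2^(e+j)) * (c^(2^e-1))^(2^j) := by rw [pow_add, pow_mul]
          _ = c^(2^(2*e-1) - 2^(e+j)) := by rw [hc1, one_pow, mul_one]
      exact hcalc.symm
    rw [Finset.sum_congr rfl hterm]
    exact CharTwo.add_self_eq_zero _
  rw [hsum]
  ring

end Stmt3Aux

open Stmt3Aux

open scoped commutatorElement

/-- In `G = PGL(2, q)` with `q = 2ᵉ > 2` and `2k + 1 = q² - 1`: if `h ≠ 1` has odd order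
and `[h, hᵍ] ≠ 1`, then `[h, hᵍ]` or `(h·hᵍ)ᵏ·h` is an involution. -/
theorem stmt_3 {F : Type*} [Field F] [Fintype F] (e : ℕ) (he : 2 ≤ e)
    (hF : Fintype.card F = 2 ^ e) (k : ℕ) (hk : 2 * k + 1 = Fintype.card F ^ 2 - 1)
    (h g : GL (Fin 2) F ⧸ Subgroup.center (GL (Fin 2) F))
    (hh1 : h ≠ 1) (hodd : Odd (orderOf h))
    (hcomm : ⁅h, g⁻¹ * h * g⁆ ≠ 1) :
    orderOf ⁅h, g⁻¹ * h * g⁆ = 2 ∨ orderOf ((h * (g⁻¹ * h * g)) ^ k * h) = 2 := by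
  classical
  -- characteristic 2
  haveI hchar2 : CharP F 2 := by
    obtain ⟨n, hp, hcard⟩ := FiniteField.card F (ringChar F)
    have hdvd : ringChar F ∣ 2^e := by
      rw [← hF, hcard]
      exact dvd_pow_self _ (by exact_mod_cast n.ne_zero)
    have h2d : ringChar F ∣ 2 := hp.dvd_of_dvd_pow hdvd
    have : ringChar F = 2 := (Nat.prime_dvd_prime_iff_eq hp Nat.prime_two).mp h2d
    exact this ▸ ringChar.charP F
  have h2 : (2:F) = 0 := CharTwo.two_eq_zero
  -- lifts
  obtain ⟨A₀, hA₀⟩ := QuotientGroup.mk_surjective h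
  obtain ⟨G₀, hG₀⟩ := QuotientGroup.mk_surjective g
  -- determinant normalization of the lift of h
  set dA := ((A₀ : Matrix (Fin 2) (Fin 2) F)).det with hdA_def
  have hdAu : IsUnit dA := (Matrix.isUnit_iff_isUnit_det _).1 A₀.isUnit
  have hdA0 : dA ≠ 0 := hdAu.ne_zero
  have hsq : Function.Surjective (fun x : F => x * x) := by
    rw [← Finite.injective_iff_surjective]
    intro x y hxy
    exact sq_inj h2 hxy
  obtain ⟨s, hs⟩ := hsq dA⁻¹
  simp only at hs
  have hs0 : s ≠ 0 := by
    intro h0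
    rw [h0, mul_zero] at hs
    exact inv_ne_zero hdA0 hs.symm
  let Z : GL (Fin 2) F :=
    ⟨s • 1, s⁻¹ • 1,
      by rw [smul_mul_assoc, one_mul, smul_smul, mul_inv_cancel₀ hs0, one_smul],
      by rw [smul_mul_assoc, one_mul, smul_smul, inv_mul_cancel₀ hs0, one_smul]⟩
  have hZc : Z ∈ Subgroup.center (GL (Fin 2) F) := by
    refine Subgroup.mem_center_iff.mpr fun gg => ?_
    refine Units.ext ?_
    show (gg : Matrix (Fin 2) (Fin 2) F) * (s • 1) = (s • 1) * (gg : Matrix (Fin 2) (Fin 2) F)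
    rw [mul_smul_comm, smul_mul_assoc, mul_one, one_mul]
  set A : GL (Fin 2) F := Z * A₀ with hA_def
  have hmkA : (QuotientGroup.mk A : GL (Fin 2) F ⧸ Subgroup.center (GL (Fin 2) F)) = h := by
    rw [hA_def, QuotientGroup.mk_mul, (QuotientGroup.eq_one_iff Z).mpr hZc, one_mul, hA₀]
  have hvA : (A : Matrix (Fin 2) (Fin 2) F) = s • (A₀ : Matrix (Fin 2) (Fin 2) F) := by
    rw [hA_def, Units.val_mul]
    show (s • 1) * (A₀ : Matrix (Fin 2) (Fin 2) F) = _
    rw [smul_mul_assoc, one_mul]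
  have hdA1 : ((A : Matrix (Fin 2) (Fin 2) F)).det = 1 := by
    rw [hvA, Matrix.det_smul, Fintype.card_fin, pow_two, hs, ← hdA_def, inv_mul_cancel₀ hdA0]
  set B : GL (Fin 2) F := G₀⁻¹ * A * G₀ with hB_def
  have hmkB : (QuotientGroup.mk B : GL (Fin 2) F ⧸ Subgroup.center (GL (Fin 2) F))
      = g⁻¹ * h * g := by
    rw [hB_def, QuotientGroup.mk_mul, QuotientGroup.mk_mul, QuotientGroup.mk_inv, hG₀, hmkA]
  set MA := (A : Matrix (Fin 2) (Fin 2) F) with hMA_def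
  set MB := (B : Matrix (Fin 2) (Fin 2) F) with hMB_def
  have hvB : MB = ((G₀⁻¹ : GL (Fin 2) F) : Matrix (Fin 2) (Fin 2) F) * MA *
      ((G₀ : GL (Fin 2) F) : Matrix (Fin 2) (Fin 2) F) := by
    rw [hMB_def, hB_def, Units.val_mul, Units.val_mul]
  have hGG : ((G₀ : GL (Fin 2) F) : Matrix (Fin 2) (Fin 2) F) *
      ((G₀⁻¹ : GL (Fin 2) F) : Matrix (Fin 2) (Fin 2) F) = 1 := by
    rw [← Units.val_mul, mul_inv_cancel, Units.val_one]
  have htB : MB.trace = MA.trace := by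
    rw [hvB, Matrix.trace_mul_comm, ← mul_assoc, hGG, one_mul]
  have hdB1 : MB.det = 1 := by
    have hdet : ((G₀⁻¹ : GL (Fin 2) F) : Matrix (Fin 2) (Fin 2) F).det *
        ((G₀ : GL (Fin 2) F) : Matrix (Fin 2) (Fin 2) F).det = 1 := by
      rw [← Matrix.det_mul, ← Units.val_mul, inv_mul_cancel, Units.val_one, Matrix.det_one]
    rw [hvB, Matrix.det_mul, Matrix.det_mul, hdA1, mul_one]
    exact hdet
  set a := MA.trace with ha_def
  set c := (MA * MB).trace with hc_def
  have hdT : (MA * MB).det = 1 := by rw [Matrix.det_mul, hdA1, hdB1, mul_one]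
  have hT : (MA * MB) * (MA * MB) = c • (MA * MB) + 1 := ch2 h2 _ hdT
  by_cases hc : c = 0
  · -- commutator is an involution
    left
    have hdBA : ((B * A : GL (Fin 2) F) : Matrix (Fin 2) (Fin 2) F).det = 1 := by
      rw [Units.val_mul, Matrix.det_mul, hdB1, hdA1, mul_one]
    have hXval : ((⁅A, B⁆ : GL (Fin 2) F) : Matrix (Fin 2) (Fin 2) F) = MA * MB * (MB * MA) := by
      rw [commutatorElement_def, Units.val_mul, Units.val_mul, Units.val_mul, mul_assoc (MA * MB)]
      have h1 : ((A⁻¹ : GL (Fin 2) F) : Matrix (Fin 2) (Fin 2) F) *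
          ((B⁻¹ : GL (Fin 2) F) : Matrix (Fin 2) (Fin 2) F)
          = (((B * A)⁻¹ : GL (Fin 2) F) : Matrix (Fin 2) (Fin 2) F) := by
        rw [← Units.val_mul]
        exact congrArg Units.val (mul_inv_rev B A).symm
      rw [h1, coe_inv h2 (B * A) hdBA, Units.val_mul]
      have h3 : (MB * MA).trace = c := by rw [hc_def, Matrix.trace_mul_comm]
      rw [h3, hc, zero_smul, zero_add]
    set y := MA * MB * (MB * MA) with hy_def
    have hdy : y.det = 1 := by
      rw [hy_def, Matrix.det_mul, Matrix.det_mul, Matrix.det_mul, hdA1, hdB1]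
      ring
    have hty : y.trace = 0 := by
      have e1 : y = (MA * (MB * MB)) * MA := by rw [hy_def]; noncomm_ring
      rw [e1, Matrix.trace_mul_comm, ← mul_assoc, ch2 h2 MA hdA1, ch2 h2 MB hdB1, htB]
      simp only [add_mul, mul_add, one_mul, mul_one, smul_mul_assoc, mul_smul_comm, smul_smul,
        Matrix.trace_add, Matrix.trace_smul, Matrix.trace_one, smul_eq_mul, Fintype.card_fin,
        Nat.cast_ofNat, ← hc_def]
      rw [hc]
      linear_combination (a * a + 1) * h2 + a * htB
    have hy2 : y * y = 1 := by
      have hch := ch2 h2 y hdy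
      rw [hty, zero_smul, zero_add] at hch
      exact hch
    have hX2 : (⁅A, B⁆ : GL (Fin 2) F) * ⁅A, B⁆ = 1 := by
      refine Units.ext ?_
      rw [Units.val_mul, hXval, hy2, Units.val_one]
    have hq : ⁅h, g⁻¹ * h * g⁆ = QuotientGroup.mk ⁅A, B⁆ := by
      rw [← hmkB, ← hmkA]
      exact (map_commutatorElement (QuotientGroup.mk' (Subgroup.center (GL (Fin 2) F))) A B).symm
    rw [hq]
    refine orderOf_eq_prime ?_ ?_
    · rw [pow_two, ← QuotientGroup.mk_mul, hX2, QuotientGroup.mk_one]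
    · rw [← hq]; exact hcomm
  · -- (h·hᵍ)ᵏ·h is an involution
    right
    have hq2 : Fintype.card F ^ 2 = 2 ^ (2*e) := by
      rw [hF, ← pow_mul, mul_comm]
    have hk' : 2*k+1 = 2^(2*e) - 1 := by rw [hk, hq2]
    have h16 : (16:ℕ) ≤ 2^(2*e) := by
      calc (16:ℕ) = 2^4 := by norm_num
        _ ≤ 2^(2*e) := Nat.pow_le_pow_right (by norm_num) (by omega)
    obtain ⟨k', rfl⟩ : ∃ k', k = k' + 1 := ⟨k - 1, by omega⟩
    have hvan : alph c (2*(k'+1)+1) = 0 := by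
      rw [show 2*(k'+1)+1 = 2^(2*e) - 1 from hk']
      exact alph_vanish (by omega) hF hc
    have hd2 := (alph_double h2 c (k'+1)).2
    have hsum0 : alph c (k'+2) * alph c (k'+2) + alph c (k'+1) * alph c (k'+1) = 0 := by
      rw [← hd2]; exact hvan
    have hkk : alph c (k'+2) = alph c (k'+1) := by
      apply sq_inj h2
      linear_combination hsum0 - (alph c (k'+1) * alph c (k'+1)) * h2
    have hrec : alph c (k'+2) = c * alph c (k'+1) + alph c k' := alph_add_two c k'
    have hkey : alph c k' = alph c (k'+1) + c * alph c (k'+1) := by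
      linear_combination hkk - hrec - (c * alph c (k'+1)) * h2
    set T := MA * MB with hT_def
    have hTpow := Tpow c T hT k'
    have hdTk : (T^(k'+1)).det = 1 := by rw [Matrix.det_pow, hT_def, hdT, one_pow]
    have hWval : (((A*B)^(k'+1) * A : GL (Fin 2) F) : Matrix (Fin 2) (Fin 2) F)
        = T^(k'+1) * MA := by
      rw [Units.val_mul, Units.val_pow_eq_pow_val, Units.val_mul]
    have htTA : (T * MA).trace = a * c + a := by
      rw [hT_def, Matrix.trace_mul_comm, ← mul_assoc, ch2 h2 MA hdA1, add_mul, one_mul,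
        smul_mul_assoc, Matrix.trace_add, Matrix.trace_smul, htB, ← hc_def, ← ha_def,
        smul_eq_mul]
    have htrW : (T^(k'+1) * MA).trace = 0 := by
      rw [hTpow, add_mul, smul_mul_assoc, smul_mul_assoc, one_mul, Matrix.trace_add,
        Matrix.trace_smul, Matrix.trace_smul, htTA, hkey, ← ha_def, smul_eq_mul, smul_eq_mul]
      linear_combination (alph c (k'+1) * a * c + alph c (k'+1) * a) * h2
    have hdW : (T^(k'+1) * MA).det = 1 := by rw [Matrix.det_mul, hdTk, hdA1, mul_one]
    have hy2 : (T^(k'+1) * MA) * (T^(k'+1) * MA) = 1 := by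
      have hch := ch2 h2 _ hdW
      rw [htrW, zero_smul, zero_add] at hch
      exact hch
    have hW2 : ((A*B)^(k'+1) * A) * ((A*B)^(k'+1) * A) = 1 := by
      refine Units.ext ?_
      rw [Units.val_mul, hWval, hy2, Units.val_one]
    have hqW : (h * (g⁻¹ * h * g))^(k'+1) * h
        = QuotientGroup.mk ((A*B)^(k'+1) * A) := by
      rw [← hmkB, ← hmkA, ← QuotientGroup.mk_mul, ← QuotientGroup.mk_pow,
        ← QuotientGroup.mk_mul]
    have hne : (h * (g⁻¹ * h * g))^(k'+1) * h ≠ 1 := by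
      intro heq
      set b := g⁻¹ * h * g with hb
      have h1 : h = ((h*b)^(k'+1))⁻¹ := eq_inv_of_mul_eq_one_right heq
      have hcom : Commute (h*b) h := by
        have hc2 : Commute (h*b) (((h*b)^(k'+1))⁻¹) :=
          ((Commute.refl (h*b)).pow_right (k'+1)).inv_right
        rwa [← h1] at hc2
      have hhb : h * b = b * h := by
        have heq2 : (h*b) * h = h * (h*b) := hcom.eq
        have : h * (b * h) = h * (h * b) := by rw [← mul_assoc]; exact heq2
        exact (mul_left_cancel this).symm
      exact hcomm (commutatorElement_eq_one_iff_commute.mpr hhb)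
    rw [hqW]
    refine orderOf_eq_prime ?_ ?_
    · rw [pow_two, ← QuotientGroup.mk_mul, hW2, QuotientGroup.mk_one]
    · rw [← hqW]; exact hne
end

section
/- Let F be a finite field of characteristic 2 and let h ∈ SL(2,F) be a matrix of odd order n > 1. Then h has a unique square root in SL(2,F) of odd order, namely h^{(n+1)/2}, and any element of SL(2,F) whose square is h generates the same cyclic subgroup as h. -/
open Matrix

/-- In a 2×2 matrix ring over a field of characteristic 2, if `x` is a non-identity
involution of determinant 1, then any determinant-1 matrix commuting with `x` squares
to the identity. -/
lemma sq_eq_one_of_commute_char_two {F : Type*} [Field F] [CharP F 2]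
    (a b c d e f g i : F)
    (hx : !![a, b; c, d] * !![a, b; c, d] = (1 : Matrix (Fin 2) (Fin 2) F))
    (hx1 : !![a, b; c, d] ≠ (1 : Matrix (Fin 2) (Fin 2) F))
    (hxd : (!![a, b; c, d] : Matrix (Fin 2) (Fin 2) F).det = 1)
    (hyd : (!![e, f; g, i] : Matrix (Fin 2) (Fin 2) F).det = 1)
    (hc : !![a, b; c, d] * !![e, f; g, i] = !![e, f; g, i] * !![a, b; c, d]) :
    !![e, f; g, i] * !![e, f; g, i] = (1 : Matrix (Fin 2) (Fin 2) F) := by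
  have h2 : (2 : F) = 0 := CharTwo.two_eq_zero
  rw [Matrix.det_fin_two_of] at hxd hyd
  simp only [Matrix.mul_fin_two] at hx hc ⊢
  have one2 : (1 : Matrix (Fin 2) (Fin 2) F) = !![1,0;0,1] := by
    ext i j; fin_cases i <;> fin_cases j <;> simp
  rw [one2] at hx ⊢
  -- extract entry equations
  have e00 : a * a + b * c = 1 := by
    have := congrFun (congrFun hx 0) 0; simpa using this
  have e01 : a * b + b * d = 0 := by
    have := congrFun (congrFun hx 0) 1; simpa using this
  have e10 : c * a + d * c = 0 := by
    have := congrFun (congrFun hx 1) 0; simpa using this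
  -- trace of x is zero, i.e. d = a
  have htr : d = a := by
    by_contra hda
    have had : a + d ≠ 0 := by
      intro h0
      apply hda
      have : d = -a := eq_neg_of_add_eq_zero_right h0
      rw [this, CharTwo.neg_eq]
    have haz : a * (a + d) = 0 := by linear_combination e00 + hxd + h2
    have hbz : b * (a + d) = 0 := by linear_combination e01
    have hcz : c * (a + d) = 0 := by linear_combination e10
    have ha0 : a = 0 := by
      rcases mul_eq_zero.mp haz with h' | h'
      · exact h'
      · exact absurd h' had
    have hb0 : b = 0 := by
      rcases mul_eq_zero.mp hbz with h' | h'
      · exact h'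
      · exact absurd h' had
    have hc0 : c = 0 := by
      rcases mul_eq_zero.mp hcz with h' | h'
      · exact h'
      · exact absurd h' had
    rw [ha0, hb0, hc0] at hxd
    simp at hxd
  subst htr
  -- x ≠ 1 gives b ≠ 0 or c ≠ 0
  have hbc : b ≠ 0 ∨ c ≠ 0 := by
    by_contra hn
    push_neg at hn
    obtain ⟨hb0, hc0⟩ := hn
    rw [hb0, hc0] at e00
    have ha1 : d = 1 := by
      have : (d - 1) * (d + 1) = 0 := by linear_combination e00
      rcases mul_eq_zero.mp this with h' | h'
      · exact sub_eq_zero.mp h'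
      · have : d = -1 := eq_neg_of_add_eq_zero_left h'
        rw [this, CharTwo.neg_eq]
    apply hx1
    rw [hb0, hc0, ha1, one2]
  -- commuting relations
  have c01 : b * (e + i) = 0 := by
    have := congrFun (congrFun hc 0) 1
    simp only [Matrix.of_apply, Matrix.cons_val', Matrix.cons_val_zero, Matrix.cons_val_one,
      Matrix.head_cons, Matrix.head_fin_const, Matrix.empty_val', Matrix.cons_val_fin_one] at this
    linear_combination this + (b*e) * h2
  have c10 : c * (e + i) = 0 := by
    have := congrFun (congrFun hc 1) 0
    simp only [Matrix.of_apply, Matrix.cons_val', Matrix.cons_val_zero, Matrix.cons_val_one,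
      Matrix.head_cons, Matrix.head_fin_const, Matrix.empty_val', Matrix.cons_val_fin_one] at this
    linear_combination this + (c*i) * h2
  have hie : i = e := by
    have key : e + i = 0 := by
      rcases hbc with hb' | hc'
      · rcases mul_eq_zero.mp c01 with h' | h'
        · exact absurd h' hb'
        · exact h'
      · rcases mul_eq_zero.mp c10 with h' | h'
        · exact absurd h' hc'
        · exact h'
    have : i = -e := eq_neg_of_add_eq_zero_right key
    rw [this, CharTwo.neg_eq]
  subst hie
  -- now compute y * y
  ext i j
  fin_cases i <;> fin_cases j <;> simp <;>
    first
      | linear_combination hyd + (f*g)*h2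
      | linear_combination (i*f)*h2
      | linear_combination (g*i)*h2

/-- An element `h` of odd order `n > 1` in `SL(2, F₂ᵉ)` has `h ^ ((n+1)/2)` as its unique
square root of odd order, and any square root of `h` generates the same cyclic subgroup. -/
theorem stmt_5 {F : Type*} [Field F] [Fintype F] (e : ℕ) (he : 0 < e)
    (hF : Fintype.card F = 2 ^ e)
    (h : Matrix.SpecialLinearGroup (Fin 2) F)
    (hodd : Odd (orderOf h)) (hgt : 1 < orderOf h) :
    (h ^ ((orderOf h + 1) / 2)) ^ 2 = h ∧
    Odd (orderOf (h ^ ((orderOf h + 1) / 2))) ∧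
    (∀ g : Matrix.SpecialLinearGroup (Fin 2) F,
      g ^ 2 = h → Odd (orderOf g) → g = h ^ ((orderOf h + 1) / 2)) ∧
    (∀ g : Matrix.SpecialLinearGroup (Fin 2) F,
      g ^ 2 = h → Subgroup.zpowers g = Subgroup.zpowers h) := by
  -- characteristic 2
  haveI hchar : CharP F 2 := by
    obtain ⟨p, hc⟩ := CharP.exists F
    haveI := hc
    obtain ⟨m, hp, hcard⟩ := FiniteField.card F p
    have hdvd : p ∣ 2 ^ e := by
      rw [← hF, hcard]
      exact dvd_pow_self p m.2.ne'
    have hp2 : p = 2 :=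
      (Nat.prime_dvd_prime_iff_eq hp Nat.prime_two).mp (hp.dvd_of_dvd_pow hdvd)
    rwa [hp2] at hc
  set n := orderOf h with hn
  have hn1 : h ^ n = 1 := pow_orderOf_eq_one h
  obtain ⟨m₀, hm₀⟩ := hodd
  have hk : (n + 1) / 2 * 2 = n + 1 := by omega
  have part1 : (h ^ ((n + 1) / 2)) ^ 2 = h := by
    rw [← pow_mul, hk, pow_succ, hn1, one_mul]
  have part2 : Odd (orderOf (h ^ ((n + 1) / 2))) := by
    have hdvd : orderOf (h ^ ((n + 1) / 2)) ∣ n := orderOf_pow_dvd _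
    rcases Nat.even_or_odd (orderOf (h ^ ((n + 1) / 2))) with hev | hod
    · exfalso
      have : 2 ∣ n := dvd_trans hev.two_dvd hdvd
      omega
    · exact hod
  have part3 : ∀ g : Matrix.SpecialLinearGroup (Fin 2) F,
      g ^ 2 = h → Odd (orderOf g) → g = h ^ ((n + 1) / 2) := by
    intro g hg hgo
    have h2n : g ^ (2 * n) = 1 := by rw [pow_mul, hg, hn1]
    have hdvd2n : orderOf g ∣ 2 * n := orderOf_dvd_of_pow_eq_one h2n
    have hco : Nat.Coprime (orderOf g) 2 := by
      exact hgo.coprime_two_right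
    have hdn : orderOf g ∣ n := (Nat.Coprime.dvd_of_dvd_mul_left hco hdvd2n)
    have hgn : g ^ n = 1 := orderOf_dvd_iff_pow_eq_one.mp hdn
    calc g = g ^ (n + 1) := by rw [pow_succ, hgn, one_mul]
      _ = (g ^ 2) ^ ((n + 1) / 2) := by rw [← pow_mul, mul_comm, hk]
      _ = h ^ ((n + 1) / 2) := by rw [hg]
  refine ⟨part1, part2, part3, fun g hg => ?_⟩
  -- any square root has odd order
  have h2n : g ^ (2 * n) = 1 := by rw [pow_mul, hg, hn1]
  have hd0 : 0 < orderOf g := by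
    rw [orderOf_pos_iff, isOfFinOrder_iff_pow_eq_one]
    exact ⟨2 * n, by omega, h2n⟩
  have hgo : Odd (orderOf g) := by
    by_contra hev
    rw [Nat.not_odd_iff_even] at hev
    set d := orderOf g with hd
    obtain ⟨r, hr⟩ := hev
    set x := g ^ (d / 2) with hx
    have hx2 : x * x = 1 := by
      rw [hx, ← pow_add, (by omega : d / 2 + d / 2 = d), hd, pow_orderOf_eq_one]
    have hx1 : x ≠ 1 := by
      intro hx1'
      have : d ∣ d / 2 := orderOf_dvd_of_pow_eq_one hx1'
      have h2le : 2 ≤ d := by omega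
      have := Nat.le_of_dvd (by omega) this
      omega
    have hcomm : x * h = h * x := by
      rw [← hg, hx, ← pow_add, ← pow_add, add_comm]
    -- move to matrices
    set X := (x : Matrix (Fin 2) (Fin 2) F) with hX
    set H := (h : Matrix (Fin 2) (Fin 2) F) with hH
    have hXe : X = !![X 0 0, X 0 1; X 1 0, X 1 1] := Matrix.eta_fin_two X
    have hHe : H = !![H 0 0, H 0 1; H 1 0, H 1 1] := Matrix.eta_fin_two H
    have key := sq_eq_one_of_commute_char_two (X 0 0) (X 0 1) (X 1 0) (X 1 1)
      (H 0 0) (H 0 1) (H 1 0) (H 1 1) ?_ ?_ ?_ ?_ ?_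
    · have hHH : h * h = 1 := by
        apply Subtype.ext
        rw [Matrix.SpecialLinearGroup.coe_mul, Matrix.SpecialLinearGroup.coe_one, ← hH, hHe]
        exact key
      have : n ∣ 2 := orderOf_dvd_of_pow_eq_one (by rw [pow_two]; exact hHH)
      have hle := Nat.le_of_dvd (by norm_num) this
      omega
    · rw [← hXe]
      have := congrArg (fun z : Matrix.SpecialLinearGroup (Fin 2) F =>
        (z : Matrix (Fin 2) (Fin 2) F)) hx2
      simpa using this
    · rw [← hXe]
      intro hX1
      apply hx1
      apply Subtype.ext
      simpa using hX1
    · rw [← hXe]; exact x.prop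
    · rw [← hHe]; exact h.prop
    · rw [← hXe, ← hHe]
      have := congrArg (fun z : Matrix.SpecialLinearGroup (Fin 2) F =>
        (z : Matrix (Fin 2) (Fin 2) F)) hcomm
      simpa using this
  -- conclude equality of zpowers
  have hgeq := part3 g hg hgo
  apply le_antisymm
  · rw [Subgroup.zpowers_le, hgeq]
    exact Subgroup.pow_mem _ (Subgroup.mem_zpowers h) _
  · rw [Subgroup.zpowers_le, ← hg]
    exact Subgroup.pow_mem _ (Subgroup.mem_zpowers g) 2
end

section
/- Let F be a finite field with q = 2^e elements, e ≥ 1, u = [[1,0],[1,1]] ∈ SL(2,F), and let g = [[a,b],[c,d]] ∈ SL(2,F) satisfy [u, u^g] ≠ 1. Write q² − 1 = 2k + 1 and define B(g) = (u·u^g)^{k+1}·g⁻¹. Then b ≠ 0 and B(g) = [[1,0],[1 + (a+d)/b, 1]]. -/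
open scoped commutatorElement

section Aux

variable {F : Type*} [Field F]

/-- Auxiliary sequence: `auxPhi t n = Σ_{i=1}^n t^{-2^i}` via its recurrence. -/
private def auxPhi (t : F) : ℕ → F
  | 0 => 0
  | n + 1 => (auxPhi t n) ^ 2 + (t⁻¹) ^ 2

private lemma aux_frob [Fintype F] (e : ℕ) (hF : Fintype.card F = 2 ^ e)
    (x : F) (n : ℕ) : x ^ 2 ^ (e + n) = x ^ 2 ^ n := by
  rw [pow_add, pow_mul, ← hF, FiniteField.pow_card]

private lemma aux_sq (h2 : (2 : F) = 0) (x y : F) : (x + y) ^ 2 = x ^ 2 + y ^ 2 := by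
  linear_combination x * y * h2

private lemma auxPhi_succ (h2 : (2 : F) = 0) (t : F) (n : ℕ) :
    auxPhi t (n + 1) = auxPhi t n + (t⁻¹) ^ 2 ^ (n + 1) := by
  induction n with
  | zero => simp [auxPhi]
  | succ n ih =>
    have h1 : auxPhi t (n + 2) = (auxPhi t (n + 1)) ^ 2 + (t⁻¹) ^ 2 := rfl
    rw [h1, ih, aux_sq h2]
    have h4 : ((t⁻¹ : F) ^ 2 ^ (n + 1)) ^ 2 = (t⁻¹) ^ 2 ^ (n + 2) := by
      rw [← pow_mul]; ring_nf
    rw [h4]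
    have h3 : auxPhi t (n + 1) = (auxPhi t n) ^ 2 + (t⁻¹) ^ 2 := rfl
    linear_combination h3 - ih + (auxPhi t n ^ 2 - auxPhi t n + t⁻¹^2 - t⁻¹^(2^(n+1)))*h2

private lemma auxPhi_e_sq [Fintype F] (e : ℕ) (hF : Fintype.card F = 2 ^ e)
    (h2 : (2 : F) = 0) (t : F) : (auxPhi t e) ^ 2 = auxPhi t e := by
  have h1 : auxPhi t (e + 1) = (auxPhi t e) ^ 2 + (t⁻¹) ^ 2 := rfl
  have h2' := auxPhi_succ h2 t e
  have h3 : (t⁻¹ : F) ^ 2 ^ (e + 1) = (t⁻¹) ^ 2 ^ 1 := aux_frob e hF t⁻¹ 1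
  rw [pow_one] at h3
  rw [h3] at h2'
  linear_combination h2' - h1

private lemma auxPhi_add [Fintype F] (e : ℕ) (hF : Fintype.card F = 2 ^ e)
    (h2 : (2 : F) = 0) (t : F) (n : ℕ) :
    auxPhi t (e + n) = auxPhi t e + auxPhi t n := by
  induction n with
  | zero => simp [auxPhi]
  | succ n ih =>
    have h1 : auxPhi t (e + (n + 1)) = (auxPhi t (e + n)) ^ 2 + (t⁻¹) ^ 2 := rfl
    have h3 : auxPhi t (n + 1) = (auxPhi t n) ^ 2 + (t⁻¹) ^ 2 := rfl
    rw [h1, ih, aux_sq h2, auxPhi_e_sq e hF h2, h3]; ring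

private lemma auxPhi_two_e [Fintype F] (e : ℕ) (hF : Fintype.card F = 2 ^ e)
    (h2 : (2 : F) = 0) (t : F) : auxPhi t (2 * e) = 0 := by
  have h1 : 2 * e = e + e := by ring
  rw [h1, auxPhi_add e hF h2]
  linear_combination auxPhi t e * h2

/-- Powers of a `2×2` matrix satisfying its Cayley–Hamilton equation `M² = t•M + 1`
in characteristic 2. -/
private lemma aux_pow (h2 : (2 : F) = 0) (t : F) (ht : t ≠ 0)
    (M : Matrix (Fin 2) (Fin 2) F) (hM : M * M = t • M + 1) (n : ℕ) :
    M ^ (2 ^ n) = (t ^ 2 ^ n * t⁻¹) • M + (t ^ 2 ^ n * auxPhi t n) • 1 := by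
  induction n with
  | zero => simp [auxPhi, mul_inv_cancel₀ ht]
  | succ n ih =>
    have hpow : M ^ 2 ^ (n + 1) = M ^ 2 ^ n * M ^ 2 ^ n := by
      rw [← pow_add]; ring_nf
    rw [hpow, ih]
    set x := t ^ 2 ^ n * t⁻¹ with hx
    set y := t ^ 2 ^ n * auxPhi t n with hy
    have key : (x • M + y • (1 : Matrix (Fin 2) (Fin 2) F)) * (x • M + y • 1)
        = (x * x) • (M * M) + (2 * (x * y)) • M + (y * y) • 1 := by
      rw [mul_add, add_mul, add_mul]
      simp only [smul_mul_assoc, mul_smul_comm, smul_smul, mul_one, one_mul]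
      module
    rw [key, h2, zero_mul, zero_smul, add_zero, hM, smul_add, smul_smul,
      add_assoc, ← add_smul]
    have hT : t ^ 2 ^ (n + 1) = t ^ 2 ^ n * t ^ 2 ^ n := by rw [← pow_add]; ring_nf
    have e1 : x * x * t = t ^ 2 ^ (n + 1) * t⁻¹ := by
      rw [hT, hx]; field_simp
    have e2 : x * x + y * y = t ^ 2 ^ (n + 1) * auxPhi t (n + 1) := by
      have h3 : auxPhi t (n + 1) = (auxPhi t n) ^ 2 + (t⁻¹) ^ 2 := rfl
      rw [hT, hx, hy, h3]; field_simp; ring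
    rw [e1, e2]

private lemma aux_fixed [Fintype F] (e : ℕ) (hF : Fintype.card F = 2 ^ e)
    (h2 : (2 : F) = 0) (t : F) (ht : t ≠ 0)
    (M : Matrix (Fin 2) (Fin 2) F) (hM : M * M = t • M + 1) :
    M ^ (2 ^ (2 * e)) = M := by
  have hphi := auxPhi_two_e e hF h2 t
  have htt : t ^ 2 ^ (2 * e) = t := by
    have h1 : (2 : ℕ) * e = e + e := by ring
    have h2' : t ^ 2 ^ (e + e) = t ^ 2 ^ e := aux_frob e hF t e
    have h3 : t ^ 2 ^ (e + 0) = t ^ 2 ^ 0 := aux_frob e hF t 0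
    simp only [add_zero, pow_zero, pow_one] at h3
    rw [h1, h2', h3]
  rw [aux_pow h2 t ht M hM (2 * e), hphi, htt, mul_zero, zero_smul, add_zero,
    mul_inv_cancel₀ ht, one_smul]

end Aux

/-- For `u = !![1,0;1,1]` and `g = !![a,b;c,d]` in `SL(2, F₂ᵉ)` with `[u, uᵍ] ≠ 1`, writing
`q² - 1 = 2k + 1`, the element `B(g) = (u·uᵍ)^(k+1)·g⁻¹` equals `!![1,0; 1+(a+d)/b, 1]`
and `b ≠ 0`. -/
theorem stmt_6 {F : Type*} [Field F] [Fintype F] (e : ℕ) (he : 0 < e)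
    (hF : Fintype.card F = 2 ^ e) (k : ℕ) (hk : 2 * k + 1 = Fintype.card F ^ 2 - 1)
    (u g : Matrix.SpecialLinearGroup (Fin 2) F)
    (hu : (u : Matrix (Fin 2) (Fin 2) F) = !![1, 0; 1, 1])
    (a b c d : F) (hg : (g : Matrix (Fin 2) (Fin 2) F) = !![a, b; c, d])
    (hcomm : ⁅u, g⁻¹ * u * g⁆ ≠ 1) :
    b ≠ 0 ∧
      (((u * (g⁻¹ * u * g)) ^ (k + 1) * g⁻¹ : Matrix.SpecialLinearGroup (Fin 2) F) :
          Matrix (Fin 2) (Fin 2) F) = !![1, 0; 1 + (a + d) / b, 1] := by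
  -- characteristic 2
  have h2 : (2 : F) = 0 := by
    haveI : CharP F (ringChar F) := ringChar.charP F
    obtain ⟨n, hp, hcard⟩ := FiniteField.card F (ringChar F)
    have hdvd : ringChar F ∣ 2 ^ e := by
      rw [← hF, hcard]; exact dvd_pow_self _ (by exact_mod_cast n.pos.ne')
    have hd2 := hp.dvd_of_dvd_pow (n := e) (by simpa using hdvd)
    have hr2 : ringChar F = 2 := (Nat.prime_dvd_prime_iff_eq hp Nat.prime_two).mp hd2
    have hcast := CharP.cast_eq_zero F (ringChar F)
    rwa [hr2, Nat.cast_ofNat] at hcast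
  have hdet : a * d - b * c = 1 := by
    have hgp := g.2
    rw [hg, Matrix.det_fin_two_of] at hgp
    exact hgp
  -- the conjugate u^g as a matrix
  have hginv : ((g⁻¹ : Matrix.SpecialLinearGroup (Fin 2) F) : Matrix (Fin 2) (Fin 2) F)
      = !![d, -b; -c, a] := by
    rw [Matrix.SpecialLinearGroup.coe_inv, hg, Matrix.adjugate_fin_two_of]
  have hconj : ((g⁻¹ * u * g : Matrix.SpecialLinearGroup (Fin 2) F) :
      Matrix (Fin 2) (Fin 2) F) = !![1 + a*b, b*b; a*a, 1 + a*b] := by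
    simp only [Matrix.SpecialLinearGroup.coe_mul]
    rw [hginv, hu, hg, Matrix.mul_fin_two, Matrix.mul_fin_two]
    ext i j
    fin_cases i <;> fin_cases j
    · simp; linear_combination hdet - a*b*h2
    · simp; linear_combination -b^2*h2
    · simp; ring
    · simp; linear_combination hdet
  -- b ≠ 0 since the commutator is nontrivial
  have hb : b ≠ 0 := by
    intro hb0
    apply hcomm
    have hcom : u * (g⁻¹ * u * g) = (g⁻¹ * u * g) * u := by
      apply Subtype.ext
      rw [Matrix.SpecialLinearGroup.coe_mul u (g⁻¹ * u * g),
        Matrix.SpecialLinearGroup.coe_mul (g⁻¹ * u * g) u, hconj, hu, hb0]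
      norm_num [Matrix.mul_fin_two]
      ring
    exact commutatorElement_eq_one_iff_commute.mpr hcom
  refine ⟨hb, ?_⟩
  -- the square root S of u·uᵍ
  set smat : Matrix (Fin 2) (Fin 2) F := !![a, b; a + c + a*(a+d)/b, a+b] with hsmat
  have hdetS : smat.det = 1 := by
    rw [hsmat, Matrix.det_fin_two_of]
    field_simp
    linear_combination -hdet - (1+b*c)*h2
  set S : Matrix.SpecialLinearGroup (Fin 2) F := ⟨smat, hdetS⟩ with hS
  have hSsq : u * (g⁻¹ * u * g) = S * S := by
    apply Subtype.ext
    rw [Matrix.SpecialLinearGroup.coe_mul u (g⁻¹ * u * g),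
      Matrix.SpecialLinearGroup.coe_mul S S, hconj, hu]
    show _ = smat * smat
    rw [hsmat, Matrix.mul_fin_two, Matrix.mul_fin_two]
    ext i j
    fin_cases i <;> fin_cases j
    · simp; field_simp; linear_combination -hdet - (b*c + a^2)*h2
    · simp; linear_combination -(a*b*h2)
    · simp; field_simp; linear_combination -(b*hdet) - (a*c*b + a^2*b + a^2*d + a^3 + c*b^2)*h2
    · simp; field_simp; linear_combination -hdet - (b*c + a*b + a^2)*h2
  have hM : smat * smat = b • smat + 1 := by
    rw [hsmat, Matrix.mul_fin_two]
    ext i j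
    fin_cases i <;> fin_cases j
    · simp; field_simp; linear_combination hdet + (b*c + a^2)*h2
    · simp; linear_combination a*b*h2
    · simp; field_simp; linear_combination (a*c*b + a^2*b + a^2*d + a^3)*h2
    · simp; field_simp; linear_combination hdet + (b*c + a*b + a^2)*h2
  have hSfix : S ^ (2 ^ (2 * e)) = S := by
    apply Subtype.ext
    rw [Matrix.SpecialLinearGroup.coe_pow]
    exact aux_fixed e hF h2 b hb smat hM
  -- exponent arithmetic
  have hcard2 : Fintype.card F ^ 2 = 2 ^ (2 * e) := by
    rw [hF, ← pow_mul, Nat.mul_comm]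
  have hk2 : 2 * (k + 1) = 2 ^ (2 * e) := by
    have h1 : 1 ≤ 2 ^ (2 * e) := Nat.one_le_two_pow
    rw [hcard2] at hk
    omega
  have hpowS : (u * (g⁻¹ * u * g)) ^ (k + 1) = S := by
    rw [hSsq, ← sq, ← pow_mul, hk2, hSfix]
  rw [hpowS]
  simp only [Matrix.SpecialLinearGroup.coe_mul]
  rw [hginv]
  show smat * _ = _
  rw [hsmat, Matrix.mul_fin_two]
  ext i j
  fin_cases i <;> fin_cases j
  · simp; linear_combination hdet
  · simp; ring
  · simp; field_simp; linear_combination (a+d+b)*hdet + b*c*d*h2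
  · simp; field_simp; linear_combination -hdet - (1+b*c)*h2
end

section
/- Let F be a field of characteristic 2, let g = [[a,b],[c,d]] ∈ SL(2,F) with a, b, c, d, a+d, λ⁻²b+c all nonzero, and set A = (a+d)/b, B = (λ⁻²b+c)/a, C = (λ⁻²b+c)/d, D = (a+d)/(λ²c). Let Δ ∈ F satisfy Δ² = λ⁻²·A·D·(B+C)·(A+B+C+D). Then Δ ≠ 0 and a·Δ = A·C·D, b·Δ = D·(B+C), c·Δ = λ⁻²·A·(B+C), and d·Δ = A·B·D. -/
/-- Recovery of matrix entries: with `A, B, C, D` defined from `g = !![a,b;c,d] ∈ SL(2,F)`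
and `Δ² = λ⁻²·A·D·(B+C)·(A+B+C+D)`, one has `Δ ≠ 0` and
`a·Δ = A·C·D`, `b·Δ = D·(B+C)`, `c·Δ = λ⁻²·A·(B+C)`, `d·Δ = A·B·D`. -/
theorem stmt_9 {F : Type*} [Field F] [CharP F 2] (a b c d l : F)
    (hdet : a * d + b * c = 1) (hl : l ≠ 0)
    (ha : a ≠ 0) (hb : b ≠ 0) (hc : c ≠ 0) (hd : d ≠ 0)
    (had : a + d ≠ 0) (hbc : l⁻¹ ^ 2 * b + c ≠ 0)
    (A B C D : F)
    (hA : A = (a + d) / b) (hB : B = (l⁻¹ ^ 2 * b + c) / a)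
    (hC : C = (l⁻¹ ^ 2 * b + c) / d) (hD : D = (a + d) / (l ^ 2 * c))
    (Δ : F) (hΔ : Δ ^ 2 = l⁻¹ ^ 2 * A * D * (B + C) * (A + B + C + D)) :
    Δ ≠ 0 ∧ a * Δ = A * C * D ∧ b * Δ = D * (B + C) ∧
      c * Δ = l⁻¹ ^ 2 * A * (B + C) ∧ d * Δ = A * B * D := by
  have habcd : a * b * c * d ≠ 0 := by simp [ha, hb, hc, hd]
  have hl2 : l ^ 2 * c ≠ 0 := mul_ne_zero (pow_ne_zero _ hl) hc
  have hA' : A * b = a + d := by rw [hA]; field_simp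
  have hB' : B * a = l⁻¹ ^ 2 * b + c := by rw [hB]; field_simp
  have hC' : C * d = l⁻¹ ^ 2 * b + c := by rw [hC]; field_simp
  have hD' : D * (l ^ 2 * c) = a + d := by rw [hD]; field_simp
  have hBC : (B + C) * (a * d) = (l⁻¹ ^ 2 * b + c) * (a + d) := by
    rw [hB, hC]; field_simp; ring
  have hu : l⁻¹ ^ 2 * l ^ 2 = 1 := by field_simp
  have hS : (A + B + C + D) * (a * d * b * c) = (a + d) * (l⁻¹ ^ 2 * b + c) := by
    have expand : (A + B + C + D) * (a * d * b * c)
        = (A * b) * (a*d*c) + ((B+C)*(a*d))*(b*c) + (D * (l^2*c)) * (l⁻¹^2 * (a*d*b))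
          + D * (a*d*b*c) * (1 - l⁻¹^2*l^2) := by ring
    rw [expand, hA', hBC, hD', hu]
    linear_combination ((a+d)*(c + l⁻¹^2*b)) * hdet
  set E : F := l⁻¹ ^ 2 * (a + d) ^ 2 * (l⁻¹ ^ 2 * b + c) / (a * b * c * d) with hE
  have hrhs : E * (a * b * c * d) = l⁻¹ ^ 2 * (a + d) ^ 2 * (l⁻¹ ^ 2 * b + c) := by
    rw [hE, div_mul_cancel₀ _ habcd]
  have hsq : Δ ^ 2 = E ^ 2 := by
    have key : Δ ^ 2 * (l ^ 2 * (a*b*c*d) ^ 2) = E ^ 2 * (l ^ 2 * (a*b*c*d) ^ 2) := by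
      rw [hΔ]
      have e1 : l⁻¹ ^ 2 * A * D * (B + C) * (A + B + C + D) * (l ^ 2 * (a*b*c*d) ^ 2)
          = l⁻¹ ^ 2 * ((A * b) * (D * (l ^ 2 * c)) * ((B + C) * (a * d))
              * ((A + B + C + D) * (a * d * b * c))) := by ring
      have e2 : E ^ 2 * (l ^ 2 * (a*b*c*d) ^ 2) = (E * (a*b*c*d)) ^ 2 * l ^ 2 := by ring
      rw [e1, hA', hD', hBC, hS, e2, hrhs]
      linear_combination (-(l⁻¹ ^ 2 * (a+d) ^ 4 * (l⁻¹ ^ 2 * b + c) ^ 2)) * hu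
    exact mul_right_cancel₀ (by simp [hl, habcd]) key
  have hEq : Δ = E := by
    have h0 : (Δ + E) ^ 2 = 0 := by
      rw [CharTwo.add_sq, hsq, CharTwo.add_self_eq_zero]
    have h1 : Δ + E = 0 := pow_eq_zero_iff two_ne_zero |>.mp h0
    have h2 : Δ = -E := eq_neg_of_add_eq_zero_left h1
    rwa [CharTwo.neg_eq] at h2
  have hE0 : E ≠ 0 := by
    rw [hE]
    exact div_ne_zero
      (mul_ne_zero (mul_ne_zero (pow_ne_zero _ (inv_ne_zero hl)) (pow_ne_zero _ had)) hbc) habcd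
  refine ⟨hEq ▸ hE0, ?_, ?_, ?_, ?_⟩
  · refine mul_right_cancel₀ (mul_ne_zero (mul_ne_zero hb hd) hl2) ?_
    rw [hEq]
    have e : a * E * (b * d * (l ^ 2 * c)) = E * (a*b*c*d) * l ^ 2 := by ring
    have e2 : A * C * D * (b * d * (l ^ 2 * c)) = (A*b) * (C*d) * (D*(l^2*c)) := by ring
    rw [e, hrhs, e2, hA', hC', hD']
    linear_combination ((a+d) ^ 2 * (l⁻¹ ^ 2 * b + c)) * hu
  · refine mul_right_cancel₀ (mul_ne_zero hl2 (mul_ne_zero ha hd)) ?_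
    rw [hEq]
    have e : b * E * (l ^ 2 * c * (a * d)) = E * (a*b*c*d) * l ^ 2 := by ring
    have e2 : D * (B + C) * (l ^ 2 * c * (a * d)) = (D*(l^2*c)) * ((B+C)*(a*d)) := by ring
    rw [e, hrhs, e2, hD', hBC]
    linear_combination ((a+d) ^ 2 * (l⁻¹ ^ 2 * b + c)) * hu
  · refine mul_right_cancel₀ (mul_ne_zero hb (mul_ne_zero (mul_ne_zero ha hd)
      (pow_ne_zero 2 hl))) ?_
    rw [hEq]
    have e : c * E * (b * (a * d * l ^ 2)) = E * (a*b*c*d) * l ^ 2 := by ring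
    have e2 : l⁻¹ ^ 2 * A * (B + C) * (b * (a * d * l ^ 2))
        = l⁻¹ ^ 2 * l ^ 2 * ((A*b) * ((B+C)*(a*d))) := by ring
    rw [e, hrhs, e2, hA', hBC, hu]
    linear_combination ((a+d) ^ 2 * (l⁻¹ ^ 2 * b + c)) * hu
  · refine mul_right_cancel₀ (mul_ne_zero (mul_ne_zero hb ha) hl2) ?_
    rw [hEq]
    have e : d * E * (b * a * (l ^ 2 * c)) = E * (a*b*c*d) * l ^ 2 := by ring
    have e2 : A * B * D * (b * a * (l ^ 2 * c)) = (A*b) * (B*a) * (D*(l^2*c)) := by ring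
    rw [e, hrhs, e2, hA', hB', hD']
    linear_combination ((a+d) ^ 2 * (l⁻¹ ^ 2 * b + c)) * hu
end

section
/- Let F be a finite field with q = 2^e elements, q > 2, u = [[1,0],[1,1]] ∈ SL(2,F), r = [[0,λ],[λ⁻¹,0]] with λ ∈ F*, and x = [[1,0],[t,1]] with t ≠ 0. Write q² − 1 = 2k+1. Then the element b(x) := (u·u^r)^{k+1}·(u^r·x)^{k+1} conjugates u to x (i.e., b(x)⁻¹·u·b(x) = x), and b(x) is congruent modulo U = {[[1,0],[w,1]] : w ∈ F} to the diagonal matrix [[s, 0],[0, s⁻¹]] where s² = t. -/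
open Matrix

private def cdSeq {R : Type*} [CommRing R] (τ : R) : ℕ → R × R
  | 0 => (1, 0)
  | j+1 => ((cdSeq τ j).1 ^ 2 * τ, (cdSeq τ j).1 ^ 2 + (cdSeq τ j).2 ^ 2)

private lemma cdSeq_map {R S : Type*} [CommRing R] [CommRing S] (f : R →+* S) (τ : R) :
    ∀ j, (cdSeq (f τ) j).1 = f (cdSeq τ j).1 ∧ (cdSeq (f τ) j).2 = f (cdSeq τ j).2
  | 0 => by simp [cdSeq]
  | j+1 => by
    obtain ⟨h1, h2⟩ := cdSeq_map f τ j
    simp [cdSeq, h1, h2]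

private lemma scalar_pow {R : Type*} [CommRing R] (h2 : (2:R) = 0) (τ α : R)
    (hα : α ^ 2 = τ * α + 1) :
    ∀ j, α ^ 2 ^ j = (cdSeq τ j).1 * α + (cdSeq τ j).2
  | 0 => by simp [cdSeq]
  | j+1 => by
    have ih := scalar_pow h2 τ α hα j
    have : α ^ 2 ^ (j+1) = (α ^ 2 ^ j) ^ 2 := by rw [← pow_mul, pow_succ]
    rw [this, ih]
    simp only [cdSeq]
    linear_combination ((cdSeq τ j).1)^2 * hα + (cdSeq τ j).1 * (cdSeq τ j).2 * α * h2

private lemma CH2 {F : Type*} [CommRing F] (h2 : (2:F) = 0) (A : Matrix (Fin 2) (Fin 2) F)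
    (hdet : A.det = 1) : A * A = (A 0 0 + A 1 1) • A + 1 := by
  rw [Matrix.det_fin_two] at hdet
  ext i j
  fin_cases i <;> fin_cases j <;>
    simp [Matrix.mul_apply, Fin.sum_univ_two, Matrix.one_apply] <;>
    first
      | ring1
      | linear_combination -hdet - h2

private lemma matrix_pow {F : Type*} [CommRing F] (h2 : (2:F) = 0)
    (A : Matrix (Fin 2) (Fin 2) F) (hdet : A.det = 1) :
    ∀ j, A ^ 2 ^ j = (cdSeq (A 0 0 + A 1 1) j).1 • A + (cdSeq (A 0 0 + A 1 1) j).2 • 1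
  | 0 => by simp [cdSeq]
  | j+1 => by
    have ih := matrix_pow h2 A hdet j
    set c := (cdSeq (A 0 0 + A 1 1) j).1
    set d := (cdSeq (A 0 0 + A 1 1) j).2
    have hstep : A ^ 2 ^ (j+1) = (A ^ 2 ^ j) * (A ^ 2 ^ j) := by
      rw [← pow_add]; ring_nf
    rw [hstep, ih]
    have expand : (c • A + d • (1 : Matrix (Fin 2) (Fin 2) F)) * (c • A + d • 1)
        = (c * c) • (A * A) + (2 * (c * d)) • A + (d * d) • 1 := by
      simp only [add_mul, mul_add, smul_mul_assoc, mul_smul_comm, smul_smul, mul_one, one_mul]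
      module
    rw [expand, CH2 h2 A hdet]
    simp only [cdSeq, h2, zero_mul, zero_smul, add_zero, smul_add, smul_smul]
    module

private lemma key_pow {F : Type*} [Field F] [Fintype F] (e : ℕ) (he : 0 < e)
    (hF : Fintype.card F = 2 ^ e) (A : Matrix.SpecialLinearGroup (Fin 2) F)
    (hτ : (A : Matrix (Fin 2) (Fin 2) F) 0 0 + (A : Matrix (Fin 2) (Fin 2) F) 1 1 ≠ 0) :
    A ^ 2 ^ (2 * e) = A := by
  -- characteristic 2
  have h2 : (2 : F) = 0 := by
    have hc := FiniteField.cast_card_eq_zero F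
    rw [hF] at hc
    push_cast at hc
    exact pow_eq_zero_iff (by omega) |>.mp hc
  haveI : CharP F 2 := (CharP.charP_iff_prime_eq_zero Nat.prime_two).mpr h2
  set K := AlgebraicClosure F
  haveI : CharP K 2 := charP_of_injective_algebraMap (algebraMap F K).injective 2
  have h2K : (2 : K) = 0 := by exact_mod_cast CharP.cast_eq_zero K 2
  set τ : F := (A : Matrix (Fin 2) (Fin 2) F) 0 0 + (A : Matrix (Fin 2) (Fin 2) F) 1 1 with hτdef
  set φ := algebraMap F K
  have hφ : Function.Injective φ := (algebraMap F K).injective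
  set τ' : K := φ τ with hτ'def
  have hτ'ne : τ' ≠ 0 := by rw [hτ'def]; simpa using hτ
  -- a root of X² + τ'X + 1 in K
  obtain ⟨α, hroot⟩ : ∃ α : K, α ^ 2 + τ' * α + 1 = 0 := by
    obtain ⟨α, hα⟩ := IsAlgClosed.exists_root
      (Polynomial.X ^ 2 + Polynomial.C τ' * Polynomial.X + 1 : Polynomial K)
      (by
        have : (Polynomial.X ^ 2 + Polynomial.C τ' * Polynomial.X + 1 : Polynomial K).degree = 2 := by
          compute_degree!
        simp [this])
    refine ⟨α, ?_⟩
    simpa using hα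
  have hα : α ^ 2 = τ' * α + 1 := by linear_combination hroot - (τ' * α + 1) * h2K
  set β : K := α + τ' with hβdef
  have hβ : β ^ 2 = τ' * β + 1 := by rw [hβdef]; linear_combination hα + τ' * α * h2K
  have hαβ : α + β = τ' := by rw [hβdef]; linear_combination α * h2K
  have hαβne : α ≠ β := by
    intro h
    apply hτ'ne
    rw [h] at hαβ
    linear_combination - hαβ + β * h2K
  -- Frobenius argument : α ^ (2^(2e)) = α, β ^ (2^(2e)) = β
  have hτ'q : τ' ^ 2 ^ e = τ' := by
    rw [hτ'def, ← map_pow]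
    congr 1
    calc τ ^ 2 ^ e = τ ^ Fintype.card F := by rw [hF]
    _ = τ := FiniteField.pow_card τ
  set γ : K := α ^ 2 ^ e with hγdef
  have hγroot : γ ^ 2 = τ' * γ + 1 := by
    rw [hγdef, ← pow_mul, mul_comm (2 ^ e) 2, pow_mul, hα, add_pow_char_pow, mul_pow, hτ'q, one_pow]
  have hcases : γ = α ∨ γ = β := by
    have hprod : (γ + α) * (γ + β) = 0 := by
      rw [hβdef]
      linear_combination hγroot + hα + (τ' * γ + α * γ + τ' * α + 1) * h2K
    rcases mul_eq_zero.mp hprod with h | h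
    · left; linear_combination h - α * h2K
    · right; linear_combination h - β * h2K
  have hfrob : ∀ y : K, y ^ 2 ^ e = y → (y + τ') ^ 2 ^ e = y + τ' := by
    intro y hy
    rw [add_pow_char_pow, hy, hτ'q]
  have hα2e : α ^ 2 ^ (2 * e) = α := by
    have h1 : α ^ 2 ^ (2 * e) = γ ^ 2 ^ e := by
      rw [hγdef, ← pow_mul, ← pow_add, two_mul]
    rcases hcases with h | h
    · rw [h1, h, ← hγdef, h]
    · rw [h1, h, hβdef, add_pow_char_pow, hτ'q, ← hγdef, h, hβdef]
      linear_combination τ' * h2K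
  have hβ2e : β ^ 2 ^ (2 * e) = β := by
    rw [hβdef, add_pow_char_pow, hα2e]
    have : τ' ^ 2 ^ (2 * e) = τ' := by
      rw [two_mul, pow_add, pow_mul, hτ'q, hτ'q]
    rw [this]
  -- conclude the scalar coefficients are 1 and 0
  have hscα := scalar_pow h2K τ' α hα (2 * e)
  have hscβ := scalar_pow h2K τ' β hβ (2 * e)
  rw [hα2e] at hscα
  rw [hβ2e] at hscβ
  set c' : K := (cdSeq τ' (2 * e)).1 with hc'def
  set d' : K := (cdSeq τ' (2 * e)).2 with hd'def
  have hc' : c' = 1 := by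
    have hdiff : (c' - 1) * (α - β) = 0 := by linear_combination hscβ - hscα
    rcases mul_eq_zero.mp hdiff with h | h
    · linear_combination h
    · exact absurd (sub_eq_zero.mp h) hαβne
  rw [hc'] at hscα
  have hd' : d' = 0 := by linear_combination - hscα
  -- transfer back to F
  obtain ⟨hm1, hm2⟩ := cdSeq_map φ τ (2 * e)
  have hcF : (cdSeq τ (2 * e)).1 = 1 := by
    apply hφ
    rw [← hm1, ← hτ'def, ← hc'def, hc', _root_.map_one]
  have hdF : (cdSeq τ (2 * e)).2 = 0 := by
    apply hφ
    rw [← hm2, ← hτ'def, ← hd'def, hd', _root_.map_zero]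
  -- the matrix computation
  have hm := matrix_pow h2 (A : Matrix (Fin 2) (Fin 2) F)
    (Matrix.SpecialLinearGroup.det_coe A) (2 * e)
  rw [← hτdef, hcF, hdF, one_smul, zero_smul, add_zero] at hm
  apply Matrix.SpecialLinearGroup.ext
  intro i j
  have : ((A ^ 2 ^ (2 * e) : Matrix.SpecialLinearGroup (Fin 2) F) : Matrix (Fin 2) (Fin 2) F)
      = (A : Matrix (Fin 2) (Fin 2) F) := by
    rw [Matrix.SpecialLinearGroup.coe_pow]
    exact hm
  rw [this]




/-- For `u = !![1,0;1,1]`, `r = !![0,λ;λ⁻¹,0]`, `x = !![1,0;t,1]` with `t ≠ 0`, and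
`q² - 1 = 2k + 1`, the element `b(x) = (u·uʳ)^(k+1)·(uʳ·x)^(k+1)` conjugates `u` to `x`
and is congruent mod the lower unitriangular subgroup to `diag(s, s⁻¹)` where `s² = t`. -/
theorem stmt_12 {F : Type*} [Field F] [Fintype F] (e : ℕ) (he : 0 < e)
    (hF : Fintype.card F = 2 ^ e) (hq : 2 < Fintype.card F)
    (k : ℕ) (hk : 2 * k + 1 = Fintype.card F ^ 2 - 1)
    (l t s : F) (hl : l ≠ 0) (ht : t ≠ 0) (hs : s ^ 2 = t)
    (u r x : Matrix.SpecialLinearGroup (Fin 2) F)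
    (hu : (u : Matrix (Fin 2) (Fin 2) F) = !![1, 0; 1, 1])
    (hr : (r : Matrix (Fin 2) (Fin 2) F) = !![0, l; l⁻¹, 0])
    (hx : (x : Matrix (Fin 2) (Fin 2) F) = !![1, 0; t, 1]) :
    ((u * (r⁻¹ * u * r)) ^ (k + 1) * ((r⁻¹ * u * r) * x) ^ (k + 1))⁻¹ * u *
        ((u * (r⁻¹ * u * r)) ^ (k + 1) * ((r⁻¹ * u * r) * x) ^ (k + 1)) = x ∧
      ∃ w : F,
        (((u * (r⁻¹ * u * r)) ^ (k + 1) * ((r⁻¹ * u * r) * x) ^ (k + 1) :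
            Matrix.SpecialLinearGroup (Fin 2) F) : Matrix (Fin 2) (Fin 2) F) =
          !![s, 0; w, s⁻¹] := by
  have h2 : (2 : F) = 0 := by
    have hc := FiniteField.cast_card_eq_zero F
    rw [hF] at hc
    push_cast at hc
    exact pow_eq_zero_iff (by omega) |>.mp hc
  have hs0 : s ≠ 0 := by
    intro h
    apply ht
    rw [← hs, h]
    ring
  subst hs
  have cinj : ∀ P Q : Matrix.SpecialLinearGroup (Fin 2) F,
      (P : Matrix (Fin 2) (Fin 2) F) = (Q : Matrix (Fin 2) (Fin 2) F) → P = Q :=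
    fun _ _ h => Subtype.coe_injective h
  -- the square roots
  have hdetN : (!![0, l; l⁻¹, l] : Matrix (Fin 2) (Fin 2) F).det = 1 := by
    rw [Matrix.det_fin_two_of]
    have hll : l * l⁻¹ = 1 := mul_inv_cancel₀ hl
    linear_combination - hll - h2
  have hdetP : (!![l * s, l * s⁻¹; s * l⁻¹, 0] : Matrix (Fin 2) (Fin 2) F).det = 1 := by
    rw [Matrix.det_fin_two_of]
    have h1 : l * s⁻¹ * (s * l⁻¹) = 1 := by field_simp
    linear_combination - h1 - h2
  set N : Matrix.SpecialLinearGroup (Fin 2) F := ⟨_, hdetN⟩ with hNdef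
  set P : Matrix.SpecialLinearGroup (Fin 2) F := ⟨_, hdetP⟩ with hPdef
  have hNc : (N : Matrix (Fin 2) (Fin 2) F) = !![0, l; l⁻¹, l] := rfl
  have hPc : (P : Matrix (Fin 2) (Fin 2) F) = !![l * s, l * s⁻¹; s * l⁻¹, 0] := rfl
  -- r is an involution
  have hrinv : r⁻¹ = r := by
    apply inv_eq_of_mul_eq_one_right
    apply cinj
    rw [Matrix.SpecialLinearGroup.coe_mul, hr, Matrix.SpecialLinearGroup.coe_one]
    ext i j
    fin_cases i <;> fin_cases j <;>
      simp [Matrix.mul_apply, Fin.sum_univ_two, Matrix.one_apply] <;> field_simp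
  -- u·uʳ = N²
  have ha : u * (r⁻¹ * u * r) = N * N := by
    apply cinj
    rw [hrinv]
    simp only [Matrix.SpecialLinearGroup.coe_mul, hu, hr, hNc]
    ext i j
    fin_cases i <;> fin_cases j <;>
      simp [Matrix.mul_apply, Fin.sum_univ_two] <;> field_simp <;> ring
  -- uʳ·x = P²
  have hb : (r⁻¹ * u * r) * x = P * P := by
    apply cinj
    rw [hrinv]
    simp only [Matrix.SpecialLinearGroup.coe_mul, hu, hr, hx, hPc]
    ext i j
    fin_cases i <;> fin_cases j <;>
      simp [Matrix.mul_apply, Fin.sum_univ_two] <;> field_simp <;> ring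
  -- powers collapse
  have hexp : 2 * (k + 1) = 2 ^ (2 * e) := by
    have hc2 : Fintype.card F ^ 2 = 2 ^ (2 * e) := by
      rw [hF, ← pow_mul, mul_comm]
    rw [hc2] at hk
    have h1 : 1 ≤ 2 ^ (2 * e) := Nat.one_le_two_pow
    omega
  have hNN : (N * N) ^ (k + 1) = N := by
    have hNτ : (N : Matrix (Fin 2) (Fin 2) F) 0 0 + (N : Matrix (Fin 2) (Fin 2) F) 1 1 ≠ 0 := by
      rw [hNc]; simpa using hl
    calc (N * N) ^ (k + 1) = N ^ (2 * (k + 1)) := by rw [pow_mul, sq]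
    _ = N := by rw [hexp]; exact key_pow e he hF N hNτ
  have hPP : (P * P) ^ (k + 1) = P := by
    have hPτ : (P : Matrix (Fin 2) (Fin 2) F) 0 0 + (P : Matrix (Fin 2) (Fin 2) F) 1 1 ≠ 0 := by
      rw [hPc]; simpa using mul_ne_zero hl hs0
    calc (P * P) ^ (k + 1) = P ^ (2 * (k + 1)) := by rw [pow_mul, sq]
    _ = P := by rw [hexp]; exact key_pow e he hF P hPτ
  have hB : (u * (r⁻¹ * u * r)) ^ (k + 1) * ((r⁻¹ * u * r) * x) ^ (k + 1) = N * P := by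
    rw [ha, hb, hNN, hPP]
  -- the matrix of N·P
  have hNP : ((N * P : Matrix.SpecialLinearGroup (Fin 2) F) : Matrix (Fin 2) (Fin 2) F)
      = !![s, 0; 0, s⁻¹] := by
    rw [Matrix.SpecialLinearGroup.coe_mul, hNc, hPc]
    ext i j
    fin_cases i <;> fin_cases j <;>
      simp [Matrix.mul_apply, Fin.sum_univ_two] <;> field_simp <;>
      first
        | ring1
        | linear_combination l * s * h2
        | linear_combination s * h2
        | linear_combination l * h2
        | linear_combination l ^ 2 * s * h2
        | linear_combination l * s ^ 2 * h2
  constructor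
  · rw [hB]
    have hcomm : u * (N * P) = (N * P) * x := by
      apply cinj
      rw [Matrix.SpecialLinearGroup.coe_mul u (N * P), Matrix.SpecialLinearGroup.coe_mul (N * P) x, hNP, hu, hx]
      ext i j
      fin_cases i <;> fin_cases j <;>
        simp [Matrix.mul_apply, Fin.sum_univ_two] <;> field_simp <;> ring
    rw [mul_assoc, hcomm, inv_mul_cancel_left]
  · exact ⟨0, by rw [hB]; exact hNP⟩
end

section
/- Let F be a finite field of order 2^e and let c₁, ..., c_n ∈ F be such that the subfields F₂[c_i] have pairwise coprime multiplicative group orders (i.e., the numbers 2^{d_i} − 1 are pairwise coprime, where d_i = [F₂[c_i] : F₂]), and suppose the c_i together generate F as a field, with all c_i ≠ 0. Then s := c₁·c₂·⋯·c_n satisfies F₂[s] = F. -/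
/-- If the subfields `F₂[cᵢ]` of `F = F₂ᵉ` have pairwise coprime multiplicative group
orders, the `cᵢ` are nonzero and together generate `F`, then `s = ∏ cᵢ` generates `F`. -/
theorem stmt_16 {F : Type*} [Field F] [Fintype F] (e : ℕ) (he : 0 < e)
    (hF : Fintype.card F = 2 ^ e) (n : ℕ) (c : Fin n → F)
    (hc0 : ∀ i, c i ≠ 0)
    (hcop : ∀ i j, i ≠ j →
      Nat.Coprime (Nat.card (Subfield.closure {c i}) - 1)
        (Nat.card (Subfield.closure {c j}) - 1))
    (hgen : Subfield.closure (Set.range c) = ⊤) :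
    Subfield.closure {∏ i, c i} = (⊤ : Subfield F) := by
  classical
  set s : F := ∏ i, c i with hs
  have hdvd : ∀ i, orderOf (c i) ∣ Nat.card (Subfield.closure {c i}) - 1 := by
    intro i
    set K := Subfield.closure {c i}
    have hmem : c i ∈ K := Subfield.subset_closure (Set.mem_singleton _)
    have hx : (⟨c i, hmem⟩ : K) ≠ 0 := by
      simp [Subtype.ext_iff, hc0 i]
    have h2 : orderOf (c i) = orderOf (⟨c i, hmem⟩ : K) := by
      rw [← orderOf_injective (K.subtype : K →* F) Subtype.val_injective ⟨c i, hmem⟩]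
      rfl
    rw [h2, ← Nat.card_units (α := K)]
    lift (⟨c i, hmem⟩ : K) to Kˣ using hx.isUnit with u hu
    rw [orderOf_units]
    exact orderOf_dvd_natCard u
  have hpos : ∀ i, 0 < orderOf (c i) := by
    intro i
    obtain ⟨u, hu⟩ := (hc0 i).isUnit
    rw [← hu, orderOf_units]
    exact orderOf_pos u
  have hcop' : ∀ i j, i ≠ j → Nat.Coprime (orderOf (c i)) (orderOf (c j)) := fun i j hij =>
    Nat.Coprime.coprime_dvd_right (hdvd j) (Nat.Coprime.coprime_dvd_left (hdvd i) (hcop i j hij))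
  have key : ∀ i, ∃ k, c i = s ^ k := by
    intro i
    set d := orderOf (c i) with hd
    rcases eq_or_lt_of_le (show 1 ≤ d from hpos i) with h1 | h1
    · refine ⟨0, ?_⟩
      rw [pow_zero, ← orderOf_eq_one_iff, ← hd]
      omega
    · set M : ℕ := ∏ j ∈ Finset.univ.erase i, orderOf (c j) with hM
      have hsM : s ^ M = c i ^ M := by
        rw [hs, ← Finset.prod_pow]
        refine Finset.prod_eq_single i (fun j _ hj => ?_) (by simp)
        exact orderOf_dvd_iff_pow_eq_one.mp
          (Finset.dvd_prod_of_mem _ (Finset.mem_erase.mpr ⟨hj, Finset.mem_univ j⟩))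
      have hMc : Nat.Coprime M d :=
        Nat.Coprime.prod_left fun j hj => hcop' j i (Finset.mem_erase.mp hj).1
      have heuler : M ^ Nat.totient d % d = 1 % d := Nat.ModEq.pow_totient hMc
      refine ⟨M ^ Nat.totient d, ?_⟩
      have ht : 1 ≤ Nat.totient d := Nat.totient_pos.mpr (hpos i)
      have h3 : s ^ M ^ Nat.totient d = c i ^ M ^ Nat.totient d := by
        rw [← Nat.sub_add_cancel ht, pow_succ', pow_mul, pow_mul, hsM]
      rw [h3, ← pow_mod_orderOf, ← hd, heuler, Nat.mod_eq_of_lt h1, pow_one]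
  rw [← top_le_iff, ← hgen, Subfield.closure_le]
  rintro x ⟨i, rfl⟩
  obtain ⟨k, hk⟩ := key i
  rw [hk]
  exact pow_mem (Subfield.subset_closure (Set.mem_singleton _)) k
end
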